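/- arXiv:1212.1432 — 10 statements merged into one kernel-verified Lean document; each statement's English description precedes it below -/
import Mathlib

section
/- The limit as n → ∞ of (∑_{k=1}^n H_k/k − γ·log n − (1/2)·log² n) equals (ζ(2) + γ²)/2, where H_k is the k-th harmonic number and γ is the Euler–Mascheroni constant. -/
open Filter Real Finset

lemma sum_harmonic_div_eq (n : ℕ) :
    (∑ k ∈ Finset.Icc 1 n, ((harmonic k : ℝ) / k))
      = ((harmonic n : ℝ) ^ 2 + ∑ k ∈ Finset.Icc 1 n, 1 / (k : ℝ) ^ 2) / 2 := by
  induction n with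
  | zero => simp
  | succ n ih =>
    rw [Finset.sum_Icc_succ_top (by omega), Finset.sum_Icc_succ_top (by omega), ih,
      harmonic_succ]
    have hc : ((n:ℝ)+1) ≠ 0 := by positivity
    push_cast
    field_simp
    ring

theorem stmt_0 :
    Tendsto (fun n : ℕ =>
        (∑ k ∈ Finset.Icc 1 n, ((harmonic k : ℝ) / k))
          - Real.eulerMascheroniConstant * Real.log n - (Real.log n) ^ 2 / 2)
      atTop (nhds ((Real.pi ^ 2 / 6 + Real.eulerMascheroniConstant ^ 2) / 2)) := by
  set γ := Real.eulerMascheroniConstant with hγ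
  have key : ∀ n : ℕ,
      (∑ k ∈ Finset.Icc 1 n, ((harmonic k : ℝ) / k)) - γ * Real.log n - (Real.log n) ^ 2 / 2
        = ((harmonic n : ℝ) - Real.log n) ^ 2 / 2
          + Real.log n * (((harmonic n : ℝ) - Real.log n) - γ)
          + (∑ k ∈ Finset.Icc 1 n, 1 / (k : ℝ) ^ 2) / 2 := by
    intro n
    rw [sum_harmonic_div_eq n]
    ring
  have h1 : Tendsto (fun n : ℕ => (harmonic n : ℝ) - Real.log n) atTop (nhds γ) :=
    Real.tendsto_harmonic_sub_log
  have hmid : Tendsto (fun n : ℕ =>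
      Real.log n * (((harmonic n : ℝ) - Real.log n) - γ)) atTop (nhds 0) := by
    have hdiv : Tendsto (fun n : ℕ => Real.log n / n) atTop (nhds 0) :=
      (Real.isLittleO_log_id_atTop.tendsto_div_nhds_zero).comp tendsto_natCast_atTop_atTop
    refine tendsto_of_tendsto_of_tendsto_of_le_of_le' tendsto_const_nhds hdiv ?_ ?_
    · filter_upwards [eventually_ge_atTop 1] with n hn
      have h1n : (1 : ℝ) ≤ n := by exact_mod_cast hn
      have hlog : 0 ≤ Real.log n := Real.log_nonneg h1n
      have hγle : γ ≤ (harmonic n : ℝ) - Real.log n := by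
        have h := Real.eulerMascheroniConstant_lt_eulerMascheroniSeq' n
        rw [Real.eulerMascheroniSeq', if_neg (by omega)] at h
        exact h.le
      have : 0 ≤ (harmonic n : ℝ) - Real.log n - γ := by linarith
      positivity
    · filter_upwards [eventually_ge_atTop 1] with n hn
      have h1n : (1 : ℝ) ≤ n := by exact_mod_cast hn
      have hn0 : (0 : ℝ) < n := by linarith
      have hlog : 0 ≤ Real.log n := Real.log_nonneg h1n
      have hupper : (harmonic n : ℝ) - Real.log n - γ ≤ 1 / n := by
        have hγgt : (harmonic n : ℝ) - Real.log (n + 1) < γ := by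
          have h := Real.eulerMascheroniSeq_lt_eulerMascheroniConstant n
          rw [Real.eulerMascheroniSeq] at h
          exact_mod_cast h
        have hlb : Real.log (n + 1) - Real.log n ≤ 1 / n := by
          rw [← Real.log_div (by positivity) (by positivity)]
          have h := Real.log_le_sub_one_of_pos (show (0:ℝ) < ((n:ℝ)+1)/n by positivity)
          calc Real.log (((n:ℝ)+1)/n) ≤ ((n:ℝ)+1)/n - 1 := h
            _ = 1 / n := by field_simp; ring
        linarith
      calc Real.log n * ((harmonic n : ℝ) - Real.log n - γ)
          ≤ Real.log n * (1 / n) := mul_le_mul_of_nonneg_left hupper hlog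
        _ = Real.log n / n := by ring
  have hS : Tendsto (fun n : ℕ => (∑ k ∈ Finset.Icc 1 n, 1 / (k : ℝ) ^ 2))
      atTop (nhds (Real.pi ^ 2 / 6)) := by
    have h := hasSum_zeta_two.tendsto_sum_nat
    have h2 := h.comp (tendsto_add_atTop_nat 1)
    refine h2.congr ?_
    intro n
    simp only [Function.comp_apply]
    rw [Finset.range_eq_Ico, Finset.sum_eq_sum_Ico_succ_bot (Nat.succ_pos n),
      Nat.succ_eq_add_one, Finset.Ico_add_one_right_eq_Icc]
    norm_num
  have hfin := (((h1.pow 2).div_const 2).add hmid).add (hS.div_const 2)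
  have hval : γ ^ 2 / 2 + 0 + Real.pi ^ 2 / 6 / 2 = (Real.pi ^ 2 / 6 + γ ^ 2) / 2 := by ring
  rw [hval] at hfin
  exact hfin.congr (fun n => (key n).symm)
end

section
/- The series ∑_{k=1}^∞ (H_k − γ − log k)/k converges and equals (ζ(2) − γ²)/2 − γ₁, where γ₁ is the first Stieltjes constant. -/
open Filter Real Topology

lemma aux_reindex (f : ℕ → ℝ) (n : ℕ) :
    ∑ k ∈ Finset.range n, f (k + 1) = ∑ k ∈ Finset.Icc 1 n, f k := by
  rw [← Finset.Ico_add_one_right_eq_Icc, Finset.sum_Ico_eq_sum_range]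
  exact Finset.sum_congr rfl fun k _ => by rw [add_comm]

lemma aux_harmonic_cast (n : ℕ) :
    (harmonic n : ℝ) = ∑ k ∈ Finset.Icc 1 n, (1 : ℝ) / (k : ℝ) := by
  rw [harmonic_eq_sum_Icc]
  push_cast
  simp [one_div]

lemma aux_sum_harmonic_div (n : ℕ) :
    ∑ k ∈ Finset.Icc 1 n, (harmonic k : ℝ) / k
      = ((harmonic n : ℝ) ^ 2 + ∑ k ∈ Finset.Icc 1 n, (1 : ℝ) / (k : ℝ) ^ 2) / 2 := by
  induction n with
  | zero => simp
  | succ n ih =>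
    rw [Finset.sum_Icc_succ_top (by omega), Finset.sum_Icc_succ_top (by omega), ih,
      harmonic_succ]
    have h : ((n : ℝ) + 1) ≠ 0 := by positivity
    push_cast
    field_simp
    ring

lemma aux_gamma_lt (n : ℕ) (hn : n ≠ 0) :
    Real.eulerMascheroniConstant < (harmonic n : ℝ) - Real.log n := by
  have h := Real.eulerMascheroniConstant_lt_eulerMascheroniSeq' n
  rwa [Real.eulerMascheroniSeq', if_neg hn] at h

theorem stmt_3 (γ₁ : ℝ)
    (hγ₁ : Tendsto (fun n : ℕ =>
        (∑ k ∈ Finset.Icc 1 n, Real.log k / k) - (Real.log n) ^ 2 / 2)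
      atTop (nhds γ₁)) :
    HasSum (fun k : ℕ =>
        ((harmonic (k + 1) : ℝ) - Real.eulerMascheroniConstant - Real.log (k + 1)) / (k + 1))
      ((Real.pi ^ 2 / 6 - Real.eulerMascheroniConstant ^ 2) / 2 - γ₁) := by
  set γ := Real.eulerMascheroniConstant with hγdef
  have hnonneg : ∀ k : ℕ,
      0 ≤ ((harmonic (k + 1) : ℝ) - γ - Real.log (k + 1)) / (k + 1) := by
    intro k
    apply div_nonneg _ (by positivity)
    have h := aux_gamma_lt (k + 1) (Nat.succ_ne_zero k)
    push_cast at h ⊢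
    linarith
  rw [hasSum_iff_tendsto_nat_of_nonneg hnonneg]
  -- abbreviations
  set D : ℕ → ℝ := fun n => (harmonic n : ℝ) - Real.log n with hD
  -- limit of sum of reciprocal squares
  have hz := hasSum_zeta_two.tendsto_sum_nat
  have hP : Tendsto (fun n : ℕ => ∑ k ∈ Finset.Icc 1 n, (1 : ℝ) / (k : ℝ) ^ 2)
      atTop (𝓝 (π ^ 2 / 6)) := by
    have h2 := hz.comp (tendsto_add_atTop_nat 1)
    apply h2.congr
    intro n
    show ∑ k ∈ Finset.range (n + 1), (1 : ℝ) / (k : ℝ) ^ 2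
        = ∑ k ∈ Finset.Icc 1 n, (1 : ℝ) / (k : ℝ) ^ 2
    rw [Finset.sum_range_succ', aux_reindex (fun k => (1 : ℝ) / (k : ℝ) ^ 2) n]
    simp
  -- D tends to γ
  have hDγ : Tendsto D atTop (𝓝 γ) := Real.tendsto_harmonic_sub_log
  -- (D n - γ) * log n tends to 0
  have hlogn : Tendsto (fun n : ℕ => Real.log n / (n : ℝ)) atTop (𝓝 0) :=
    (Real.isLittleO_log_id_atTop.tendsto_div_nhds_zero).comp tendsto_natCast_atTop_atTop
  have hDl : Tendsto (fun n : ℕ => (D n - γ) * Real.log n) atTop (𝓝 0) := by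
    apply tendsto_of_tendsto_of_tendsto_of_le_of_le' tendsto_const_nhds hlogn
    · filter_upwards [eventually_ge_atTop 1] with n hn
      have h1 : 0 ≤ D n - γ := by
        have := aux_gamma_lt n (by omega)
        simp only [hD]
        linarith
      have h2 : 0 ≤ Real.log n := Real.log_nonneg (by exact_mod_cast hn)
      positivity
    · filter_upwards [eventually_ge_atTop 1] with n hn
      have hn0 : (0 : ℝ) < n := by exact_mod_cast Nat.lt_of_lt_of_le Nat.zero_lt_one hn
      have h1 : D n - γ ≤ 1 / n := by
        have hlow := Real.eulerMascheroniSeq_lt_eulerMascheroniConstant n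
        rw [Real.eulerMascheroniSeq] at hlow
        have hlog : Real.log ((n : ℝ) + 1) - Real.log (n : ℝ) ≤ 1 / n := by
          rw [← Real.log_div (by positivity) (by positivity)]
          calc Real.log (((n : ℝ) + 1) / n) ≤ ((n : ℝ) + 1) / n - 1 :=
                Real.log_le_sub_one_of_pos (by positivity)
            _ = 1 / n := by field_simp; ring
        simp only [hD]
        linarith
      have h2 : 0 ≤ Real.log n := Real.log_nonneg (by exact_mod_cast hn)
      calc (D n - γ) * Real.log n ≤ (1 / n) * Real.log n := by
            apply mul_le_mul_of_nonneg_right h1 h2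
        _ = Real.log n / n := by ring
  -- key combined limit
  have key : Tendsto (fun n : ℕ =>
      (∑ k ∈ Finset.Icc 1 n, (1 : ℝ) / (k : ℝ) ^ 2) / 2
        - ((∑ k ∈ Finset.Icc 1 n, Real.log k / k) - (Real.log n) ^ 2 / 2)
        + (D n - γ) * Real.log n
        + (D n * D n / 2 - γ * D n)) atTop
      (𝓝 (π ^ 2 / 6 / 2 - γ₁ + 0 + (γ * γ / 2 - γ * γ))) :=
    (((hP.div_const 2).sub hγ₁).add hDl).add
      (((hDγ.mul hDγ).div_const 2).sub (hDγ.const_mul γ))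
  have hval : (π ^ 2 / 6 - γ ^ 2) / 2 - γ₁
      = π ^ 2 / 6 / 2 - γ₁ + 0 + (γ * γ / 2 - γ * γ) := by ring
  rw [hval]
  apply key.congr
  intro n
  -- pointwise identity between the two expressions
  have e1 : ∑ k ∈ Finset.range n, ((harmonic (k + 1) : ℝ) - γ - Real.log (k + 1)) / (k + 1)
      = ∑ k ∈ Finset.Icc 1 n, ((harmonic k : ℝ) - γ - Real.log k) / k := by
    rw [← aux_reindex (fun k => ((harmonic k : ℝ) - γ - Real.log k) / k) n]
    exact Finset.sum_congr rfl fun k _ => by push_cast; ring_nf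
  have e2 : ∑ k ∈ Finset.Icc 1 n, ((harmonic k : ℝ) - γ - Real.log k) / k
      = (∑ k ∈ Finset.Icc 1 n, (harmonic k : ℝ) / k)
        - γ * (∑ k ∈ Finset.Icc 1 n, (1 : ℝ) / (k : ℝ))
        - ∑ k ∈ Finset.Icc 1 n, Real.log k / k := by
    rw [Finset.mul_sum, ← Finset.sum_sub_distrib, ← Finset.sum_sub_distrib]
    exact Finset.sum_congr rfl fun k _ => by rw [sub_div, sub_div]; ring
  rw [e2, aux_sum_harmonic_div, ← aux_harmonic_cast] at e1
  rw [e1]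
  simp only [hD]
  ring
end

section
/- ∫_0^1 (ψ(1+x) + γ)/x dx = ∑_{n=1}^∞ log(n+1)/(n(n+1)). -/
open Real MeasureTheory Filter Topology Set Finset

/-- The digamma function `ψ(x) = (log Γ)'(x)`. -/
noncomputable def digamma (x : ℝ) : ℝ := deriv (fun y => Real.log (Real.Gamma y)) x

lemma digamma_eq (x : ℝ) : digamma x = deriv (Real.log ∘ Real.Gamma) x := rfl

lemma diff_logGamma {x : ℝ} (hx : 0 < x) :
    DifferentiableAt ℝ (Real.log ∘ Real.Gamma) x := by
  refine ((Real.differentiableAt_Gamma ?_).log (Real.Gamma_ne_zero ?_)) <;>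
    exact fun m => ((neg_nonpos.mpr m.cast_nonneg).trans_lt hx).ne'

lemma digamma_rec {x : ℝ} (hx : 0 < x) : digamma (x + 1) = digamma x + 1 / x := by
  simp only [digamma_eq]
  rw [← deriv_comp_add_const, one_div, ← Real.deriv_log,
    ← deriv_add (diff_logGamma hx) (Real.differentiableAt_log hx.ne')]
  apply Filter.EventuallyEq.deriv_eq
  filter_upwards [eventually_gt_nhds hx] with y hy
  simp only [Pi.add_apply, Function.comp_apply, Real.Gamma_add_one hy.ne',
    Real.log_mul hy.ne' (Real.Gamma_pos_of_pos hy).ne', add_comm]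

lemma digamma_nat (n : ℕ) :
    digamma (n + 1) = -Real.eulerMascheroniConstant + ∑ i ∈ Finset.range n, 1 / ((i : ℝ) + 1) := by
  have h1 : digamma ((n : ℝ) + 1) = deriv Real.Gamma (n + 1) / Real.Gamma (n + 1) := by
    rw [digamma_eq, Function.comp_def,
      deriv.log (Real.differentiableAt_Gamma
        (fun m => ((neg_nonpos.mpr m.cast_nonneg).trans_lt (by positivity)).ne')) (by positivity)]
  rw [h1, Real.deriv_Gamma_nat, Real.Gamma_nat_eq_factorial,
    mul_div_cancel_left₀ _ (by positivity : (n.factorial : ℝ) ≠ 0)]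
  congr 1
  rw [harmonic]
  push_cast
  simp [one_div]

lemma digamma_mono : MonotoneOn digamma (Set.Ioi 0) := by
  have := convexOn_log_Gamma.monotoneOn_deriv (fun x hx => diff_logGamma hx)
  exact this
lemma digamma_add_nat {x : ℝ} (hx : 0 < x) (n : ℕ) :
    digamma (x + n) = digamma x + ∑ k ∈ Finset.range n, 1 / (x + k) := by
  induction n with
  | zero => simp
  | succ n ih =>
    have h : x + (n + 1 : ℕ) = (x + n) + 1 := by push_cast; ring
    rw [h, digamma_rec (by positivity), ih, Finset.sum_range_succ]
    ring

lemma hasSum_digamma {x : ℝ} (hx : 0 < x) (hx1 : x < 1) :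
    HasSum (fun k : ℕ => 1 / ((k : ℝ) + 1) - 1 / ((k : ℝ) + 1 + x))
      (digamma (1 + x) + Real.eulerMascheroniConstant) := by
  set γ := Real.eulerMascheroniConstant
  set L := digamma (1 + x) + γ with hL
  rw [hasSum_iff_tendsto_nat_of_nonneg]
  · have key : ∀ n : ℕ, ∑ k ∈ Finset.range n, (1 / ((k : ℝ) + 1) - 1 / ((k : ℝ) + 1 + x)) =
        (∑ i ∈ Finset.range n, 1 / ((i : ℝ) + 1)) - ∑ k ∈ Finset.range n, 1 / ((1 + x) + k) := by
      intro n
      rw [Finset.sum_sub_distrib]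
      congr 1
      exact Finset.sum_congr rfl fun k _ => by ring_nf
    have hlow : ∀ n : ℕ, ∑ k ∈ Finset.range n, (1 / ((k : ℝ) + 1) - 1 / ((k : ℝ) + 1 + x)) ≤ L := by
      intro n
      have h1 : digamma ((n : ℝ) + 1) ≤ digamma ((1 + x) + n) := by
        apply digamma_mono (Set.mem_Ioi.mpr (by positivity)) (Set.mem_Ioi.mpr (by positivity))
        linarith
      rw [digamma_nat, digamma_add_nat (by positivity)] at h1
      rw [key]
      simp only [hL, γ]
      linarith
    have hup : ∀ n : ℕ, L ≤ (∑ k ∈ Finset.range n, (1 / ((k : ℝ) + 1) - 1 / ((k : ℝ) + 1 + x)))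
        + 1 / ((n : ℝ) + 1) := by
      intro n
      have h1 : digamma ((1 + x) + n) ≤ digamma (((n + 1 : ℕ) : ℝ) + 1) := by
        apply digamma_mono (Set.mem_Ioi.mpr (by positivity)) (Set.mem_Ioi.mpr (by positivity))
        push_cast; linarith
      rw [digamma_nat, digamma_add_nat (by positivity), Finset.sum_range_succ] at h1
      rw [key]
      simp only [hL, γ]
      linarith
    refine tendsto_of_tendsto_of_tendsto_of_le_of_le'
      (g := fun n : ℕ => L - 1 / ((n : ℝ) + 1)) (h := fun _ : ℕ => L) ?_ ?_ ?_ ?_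
    · simpa using tendsto_const_nhds.sub (tendsto_one_div_add_atTop_nhds_zero_nat (𝕜 := ℝ))
    · exact tendsto_const_nhds
    · filter_upwards with n; linarith [hup n]
    · filter_upwards with n; exact hlow n
  · intro k
    have hk : (0:ℝ) < (k:ℝ) + 1 := by positivity
    have : 1 / ((k : ℝ) + 1 + x) ≤ 1 / ((k : ℝ) + 1) := by
      apply one_div_le_one_div_of_le hk; linarith
    linarith
noncomputable def g (k : ℕ) (x : ℝ) : ℝ := 1 / (((k : ℝ) + 1) * ((k : ℝ) + 1 + x))

lemma g_contOn (k : ℕ) : ContinuousOn (g k) (Set.Icc 0 1) := by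
  apply ContinuousOn.div continuousOn_const
  · fun_prop
  · rintro x ⟨hx0, hx1⟩
    positivity

lemma g_integrable (k : ℕ) : IntegrableOn (g k) (Set.Ioo 0 1) := by
  exact ((g_contOn k).integrableOn_Icc).mono_set Set.Ioo_subset_Icc_self

lemma g_integral (k : ℕ) : ∫ x in Set.Ioo (0:ℝ) 1, g k x
    = (1 / ((k : ℝ) + 1)) * (Real.log ((k : ℝ) + 2) - Real.log ((k : ℝ) + 1)) := by
  rw [← MeasureTheory.integral_Ioc_eq_integral_Ioo,
    ← intervalIntegral.integral_of_le (by norm_num : (0:ℝ) ≤ 1)]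
  have hg : ∀ x : ℝ, g k x = (1 / ((k : ℝ) + 1)) * (((k : ℝ) + 1) + x)⁻¹ := by
    intro x; rw [g]; rw [one_div, mul_inv, one_div]
  simp_rw [hg]
  rw [intervalIntegral.integral_const_mul]
  congr 1
  have := intervalIntegral.integral_comp_add_left (a := (0:ℝ)) (b := 1)
    (fun y : ℝ => y⁻¹) ((k : ℝ) + 1)
  rw [this, add_zero, integral_inv (by
      rw [Set.uIcc_of_le (by linarith)]
      rintro ⟨h1, h2⟩
      have : (0:ℝ) < (k:ℝ) + 1 := by positivity
      linarith)]
  rw [← Real.log_div (by positivity) (by positivity)]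
  congr 1
  ring

lemma g_norm_integral_le (k : ℕ) :
    ∫ x in Set.Ioo (0:ℝ) 1, ‖g k x‖ ≤ 1 / ((k : ℝ) + 1) ^ 2 := by
  have h1 : ∫ x in Set.Ioo (0:ℝ) 1, ‖g k x‖ ≤ ∫ _x in Set.Ioo (0:ℝ) 1, 1 / ((k : ℝ) + 1) ^ 2 := by
    apply MeasureTheory.setIntegral_mono_on (g_integrable k).norm
      (integrableOn_const (by simp)) measurableSet_Ioo
    rintro x ⟨hx0, hx1⟩
    rw [Real.norm_of_nonneg (by rw [g]; positivity), g]
    rw [div_le_div_iff₀ (by positivity) (by positivity)]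
    nlinarith [sq_nonneg ((k:ℝ)+1)]
  calc _ ≤ _ := h1
    _ ≤ _ := by
      rw [MeasureTheory.setIntegral_const, Real.volume_real_Ioo, smul_eq_mul]
      norm_num

lemma g_summable : Summable (fun k : ℕ => ∫ x in Set.Ioo (0:ℝ) 1, ‖g k x‖) := by
  apply Summable.of_nonneg_of_le
    (fun k => MeasureTheory.integral_nonneg fun x => norm_nonneg _)
    (fun k => g_norm_integral_le k)
  have : Summable (fun n : ℕ => 1 / ((n : ℝ)) ^ 2) := by
    rw [Real.summable_one_div_nat_pow]; norm_num
  have h2 := (summable_nat_add_iff 1).mpr this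
  refine h2.congr fun k => ?_
  push_cast
  ring_nf
noncomputable def aa (k : ℕ) : ℝ := (1 / ((k : ℝ) + 1)) * (Real.log ((k : ℝ) + 2) - Real.log ((k : ℝ) + 1))
noncomputable def bb (k : ℕ) : ℝ := Real.log ((k : ℝ) + 2) / (((k : ℝ) + 1) * ((k : ℝ) + 2))

lemma aa_nonneg (k : ℕ) : 0 ≤ aa k := by
  apply mul_nonneg (by positivity)
  have := Real.log_le_log (by positivity : (0:ℝ) < (k:ℝ)+1) (by linarith : ((k:ℝ)+1) ≤ (k:ℝ)+2)
  linarith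

lemma aa_le (k : ℕ) : aa k ≤ 1 / ((k : ℝ) + 1) ^ 2 := by
  have h1 : Real.log ((k : ℝ) + 2) - Real.log ((k : ℝ) + 1) ≤ 1 / ((k : ℝ) + 1) := by
    rw [← Real.log_div (by positivity) (by positivity)]
    have := Real.log_le_sub_one_of_pos (show (0:ℝ) < ((k:ℝ)+2)/((k:ℝ)+1) by positivity)
    have h2 : ((k:ℝ)+2)/((k:ℝ)+1) - 1 = 1/((k:ℝ)+1) := by field_simp; ring
    linarith
  calc aa k ≤ (1 / ((k : ℝ) + 1)) * (1 / ((k : ℝ) + 1)) := by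
        unfold aa; apply mul_le_mul_of_nonneg_left h1 (by positivity)
    _ = 1 / ((k : ℝ) + 1) ^ 2 := by rw [div_mul_div_comm, one_mul, ← sq]

lemma summable_sq_shift : Summable (fun k : ℕ => 1 / ((k : ℝ) + 1) ^ 2) := by
  have : Summable (fun n : ℕ => 1 / ((n : ℝ)) ^ 2) := by
    rw [Real.summable_one_div_nat_pow]; norm_num
  refine ((summable_nat_add_iff 1).mpr this).congr fun k => by push_cast; ring_nf

lemma aa_summable : Summable aa :=
  Summable.of_nonneg_of_le aa_nonneg aa_le summable_sq_shift

lemma bb_nonneg (k : ℕ) : 0 ≤ bb k := by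
  apply div_nonneg _ (by positivity)
  apply Real.log_nonneg; push_cast; linarith

lemma log_le_two_sqrt {y : ℝ} (hy : 0 < y) : Real.log y ≤ 2 * Real.sqrt y := by
  have h1 : Real.log (Real.sqrt y) ≤ Real.sqrt y - 1 :=
    Real.log_le_sub_one_of_pos (Real.sqrt_pos.mpr hy)
  rw [Real.log_sqrt hy.le] at h1
  linarith [Real.sqrt_nonneg y]

lemma bb_summable : Summable bb := by
  have big : Summable (fun k : ℕ => 2 / (((k:ℝ)+1) * Real.sqrt ((k:ℝ)+1))) := by
    have base : Summable (fun n : ℕ => 1 / ((n : ℝ)) ^ ((3:ℝ)/2)) :=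
      Real.summable_one_div_nat_rpow.mpr (by norm_num)
    have shifted := (summable_nat_add_iff 1).mpr base
    refine ((shifted.mul_left 2).congr fun k => ?_)
    have hk1 : (0:ℝ) < (k:ℝ) + 1 := by positivity
    have key : (((k+1:ℕ)):ℝ) ^ ((3:ℝ)/2) = ((k:ℝ)+1) * Real.sqrt ((k:ℝ)+1) := by
      push_cast
      rw [show ((3:ℝ)/2) = 1 + 1/2 by norm_num, Real.rpow_add hk1, Real.rpow_one,
        Real.sqrt_eq_rpow]
    rw [key, mul_one_div]
  refine Summable.of_nonneg_of_le bb_nonneg (fun k => ?_) big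
  · 
    have hk1 : (0:ℝ) < (k:ℝ) + 1 := by positivity
    have hk2 : (0:ℝ) < (k:ℝ) + 2 := by positivity
    have hs2 : (0:ℝ) < Real.sqrt ((k:ℝ)+2) := Real.sqrt_pos.mpr hk2
    have hs1 : (0:ℝ) < Real.sqrt ((k:ℝ)+1) := Real.sqrt_pos.mpr hk1
    have step1 : bb k ≤ 2 / (((k:ℝ)+1) * Real.sqrt ((k:ℝ)+2)) := by
      unfold bb
      rw [div_le_div_iff₀ (by positivity) (by positivity)]
      have hlog := log_le_two_sqrt hk2
      have hmm : Real.sqrt ((k:ℝ)+2) * Real.sqrt ((k:ℝ)+2) = (k:ℝ)+2 :=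
        Real.mul_self_sqrt hk2.le
      nlinarith [mul_le_mul_of_nonneg_right hlog
        (by positivity : (0:ℝ) ≤ ((k:ℝ)+1) * Real.sqrt ((k:ℝ)+2))]
    refine step1.trans ?_
    apply div_le_div_of_nonneg_left (by norm_num) (by positivity)
    have : Real.sqrt ((k:ℝ)+1) ≤ Real.sqrt ((k:ℝ)+2) := Real.sqrt_le_sqrt (by linarith)
    nlinarith

lemma partial_identity (N : ℕ) :
    ∑ k ∈ Finset.range N, aa k
      = (∑ k ∈ Finset.range N, bb k) + Real.log ((N:ℝ)+1) / ((N:ℝ)+1) := by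
  induction N with
  | zero => simp
  | succ N ih =>
    rw [Finset.sum_range_succ, Finset.sum_range_succ, ih]
    have h1 : ((N:ℝ)+1) ≠ 0 := by positivity
    have h2 : ((N:ℝ)+2) ≠ 0 := by positivity
    have h : aa N = bb N + Real.log ((N:ℝ)+2)/((N:ℝ)+2) - Real.log ((N:ℝ)+1)/((N:ℝ)+1) := by
      unfold aa bb; field_simp; ring
    rw [h]
    push_cast
    ring_nf

lemma log_lim : Filter.Tendsto (fun N : ℕ => Real.log ((N:ℝ)+1) / ((N:ℝ)+1)) atTop (𝓝 0) := by
  have h1 : Filter.Tendsto (fun N : ℕ => ((N:ℝ)+1)) atTop atTop :=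
    Filter.tendsto_atTop_add_const_right _ 1 tendsto_natCast_atTop_atTop
  have := (Real.tendsto_pow_log_div_mul_add_atTop 1 0 1 one_ne_zero).comp h1
  simpa [Function.comp_def] using this

lemma tsum_aa_eq_bb : ∑' k, aa k = ∑' k, bb k := by
  have ha := aa_summable.hasSum.tendsto_sum_nat
  have hb := bb_summable.hasSum.tendsto_sum_nat
  have hc := hb.add log_lim
  rw [add_zero] at hc
  have heq : (fun N : ℕ => ∑ k ∈ Finset.range N, aa k)
      = fun N : ℕ => (∑ k ∈ Finset.range N, bb k) + Real.log ((N:ℝ)+1) / ((N:ℝ)+1) :=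
    funext partial_identity
  rw [heq] at ha
  exact tendsto_nhds_unique ha hc

theorem stmt_7 :
    ∫ x in Set.Ioo (0 : ℝ) 1, (digamma (1 + x) + Real.eulerMascheroniConstant) / x
      = ∑' n : ℕ, Real.log (n + 2) / ((n + 1) * (n + 2)) := by
  have hstep : ∀ x ∈ Set.Ioo (0:ℝ) 1,
      (digamma (1 + x) + Real.eulerMascheroniConstant) / x = ∑' k : ℕ, g k x := by
    rintro x ⟨hx0, hx1⟩
    have h := (hasSum_digamma hx0 hx1).div_const x
    have heq : (fun k : ℕ => (1 / ((k : ℝ) + 1) - 1 / ((k : ℝ) + 1 + x)) / x)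
        = fun k : ℕ => g k x := by
      funext k
      rw [g]
      have h1 : ((k:ℝ)+1) ≠ 0 := by positivity
      have h2 : ((k:ℝ)+1+x) ≠ 0 := by positivity
      field_simp
      ring
    rw [heq] at h
    exact h.tsum_eq.symm
  rw [MeasureTheory.setIntegral_congr_fun measurableSet_Ioo hstep,
    ← MeasureTheory.integral_tsum_of_summable_integral_norm (fun k => g_integrable k) g_summable]
  calc ∑' k : ℕ, ∫ x in Set.Ioo (0:ℝ) 1, g k x
      = ∑' k : ℕ, aa k := tsum_congr fun k => (g_integral k).trans rfl
    _ = ∑' k : ℕ, bb k := tsum_aa_eq_bb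
    _ = ∑' n : ℕ, Real.log (n + 2) / ((n + 1) * (n + 2)) := tsum_congr fun n => rfl
end

section
/- ∑_{n=1}^∞ log(n+1)/(n(n+1)) = ∫_0^1 ((1−x)·log(1−x))/(x·log x) dx. -/
open MeasureTheory Real Filter Set

namespace Stmt10Aux

noncomputable def f (n : ℕ) (x : ℝ) : ℝ :=
  (x ^ (n + 1) - x ^ n) / (((n : ℝ) + 1) * Real.log x)

noncomputable def c (n : ℕ) : ℝ :=
  (Real.log ((n : ℝ) + 2) - Real.log ((n : ℝ) + 1)) / ((n : ℝ) + 1)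

lemma c_nonneg (n : ℕ) : 0 ≤ c n := by
  apply div_nonneg _ (by positivity)
  have : Real.log ((n : ℝ) + 1) ≤ Real.log ((n : ℝ) + 2) :=
    Real.log_le_log (by positivity) (by linarith)
  linarith

lemma summable_c : Summable c := by
  have hs : Summable (fun n : ℕ => 1 / ((n : ℝ) + 1) ^ 2) := by
    have := (Real.summable_one_div_nat_pow (p := 2)).2 (by norm_num)
    have h2 := (summable_nat_add_iff (f := fun n : ℕ => 1 / (n : ℝ) ^ 2) 1).2 this
    simpa using h2
  apply Summable.of_nonneg_of_le c_nonneg _ hs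
  intro n
  have h1 : Real.log ((n : ℝ) + 2) - Real.log ((n : ℝ) + 1) ≤ 1 / ((n : ℝ) + 1) := by
    have hpos : (0 : ℝ) < ((n : ℝ) + 2) / ((n : ℝ) + 1) := by positivity
    have := Real.log_le_sub_one_of_pos hpos
    rw [← Real.log_div (by positivity) (by positivity)]
    have : ((n : ℝ) + 2) / ((n : ℝ) + 1) - 1 = 1 / ((n : ℝ) + 1) := by
      field_simp
      norm_num
    linarith [Real.log_le_sub_one_of_pos hpos]
  unfold c
  rw [div_le_div_iff₀ (by positivity) (by positivity)]
  calc (Real.log ((n : ℝ) + 2) - Real.log ((n : ℝ) + 1)) * ((n : ℝ) + 1) ^ 2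
      ≤ (1 / ((n : ℝ) + 1)) * ((n : ℝ) + 1) ^ 2 := by
        apply mul_le_mul_of_nonneg_right h1 (by positivity)
    _ = 1 * ((n : ℝ) + 1) := by field_simp

lemma key_integral (n : ℕ) :
    ∫ x in Set.Ioo (0 : ℝ) 1, (x ^ (n + 1) - x ^ n) / Real.log x
      = Real.log ((n : ℝ) + 2) - Real.log ((n : ℝ) + 1) := by
  set μ : Measure ℝ := volume.restrict (Set.Ioo (0 : ℝ) 1) with hμ
  set ν : Measure ℝ := volume.restrict (Set.Ioc (n : ℝ) ((n : ℝ) + 1)) with hν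
  have hprod : μ.prod ν
      = (volume.prod volume).restrict ((Set.Ioo (0 : ℝ) 1) ×ˢ (Set.Ioc (n : ℝ) ((n : ℝ) + 1))) :=
    Measure.prod_restrict _ _
  have hmeas : Measurable (fun p : ℝ × ℝ => Real.exp (p.2 * Real.log p.1)) :=
    (measurable_snd.mul (Real.measurable_log.comp measurable_fst)).exp
  have hmemae : ∀ᵐ p : ℝ × ℝ ∂(μ.prod ν),
      p.1 ∈ Set.Ioo (0 : ℝ) 1 ∧ p.2 ∈ Set.Ioc (n : ℝ) ((n : ℝ) + 1) := by
    rw [hprod]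
    filter_upwards [ae_restrict_mem (measurableSet_Ioo.prod measurableSet_Ioc)] with p hp
    exact ⟨hp.1, hp.2⟩
  haveI : IsFiniteMeasure (μ.prod ν) := by
    constructor
    rw [hprod, Measure.restrict_apply_univ, Measure.prod_prod]
    exact ENNReal.mul_lt_top (by simp [Real.volume_Ioo]) (by simp [Real.volume_Ioc])
  have hint : Integrable (Function.uncurry fun x t : ℝ => Real.exp (t * Real.log x)) (μ.prod ν) := by
    apply Integrable.mono' (integrable_const (1 : ℝ)) hmeas.aestronglyMeasurable
    filter_upwards [hmemae] with p hp
    rw [Real.norm_eq_abs, abs_of_pos (Real.exp_pos _)]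
    rw [Real.exp_le_one_iff]
    have h1 : Real.log p.1 ≤ 0 := le_of_lt (Real.log_neg hp.1.1 hp.1.2)
    have h2 : (0 : ℝ) ≤ p.2 := le_trans (Nat.cast_nonneg n) (le_of_lt hp.2.1)
    exact mul_nonpos_of_nonneg_of_nonpos h2 h1
  have hswap := MeasureTheory.integral_integral_swap hint
  -- compute the left side
  have hleft : (∫ x, ∫ t, Real.exp (t * Real.log x) ∂ν ∂μ)
      = ∫ x in Set.Ioo (0 : ℝ) 1, (x ^ (n + 1) - x ^ n) / Real.log x := by
    rw [hμ]
    apply setIntegral_congr_fun measurableSet_Ioo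
    intro x hx
    dsimp only
    have hx0 : (0 : ℝ) < x := hx.1
    have hlog : Real.log x < 0 := Real.log_neg hx.1 hx.2
    have hlogne : Real.log x ≠ 0 := ne_of_lt hlog
    have hle : (n : ℝ) ≤ (n : ℝ) + 1 := by linarith
    rw [hν, ← intervalIntegral.integral_of_le hle]
    rw [intervalIntegral.integral_comp_mul_right Real.exp hlogne]
    rw [integral_exp]
    have h1 : Real.exp (((n : ℝ) + 1) * Real.log x) = x ^ (n + 1) := by
      rw [mul_comm, ← Real.rpow_def_of_pos hx0, ← Real.rpow_natCast x (n + 1)]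
      push_cast
      ring_nf
    have h2 : Real.exp ((n : ℝ) * Real.log x) = x ^ n := by
      rw [mul_comm, ← Real.rpow_def_of_pos hx0, ← Real.rpow_natCast x n]
    rw [smul_eq_mul, h1, h2, inv_mul_eq_div]
  -- compute the right side
  have hright : (∫ t, ∫ x, Real.exp (t * Real.log x) ∂μ ∂ν)
      = Real.log ((n : ℝ) + 2) - Real.log ((n : ℝ) + 1) := by
    have hstep : (∫ t, ∫ x, Real.exp (t * Real.log x) ∂μ ∂ν)
        = ∫ t in Set.Ioc (n : ℝ) ((n : ℝ) + 1), 1 / (t + 1) := by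
      rw [hν]
      apply setIntegral_congr_fun measurableSet_Ioc
      intro t ht
      dsimp only
      have ht0 : (0 : ℝ) < t := lt_of_le_of_lt (Nat.cast_nonneg n) ht.1
      have h1 : (∫ x, Real.exp (t * Real.log x) ∂μ) = ∫ x in Set.Ioo (0 : ℝ) 1, x ^ t := by
        rw [hμ]
        apply setIntegral_congr_fun measurableSet_Ioo
        intro x hx
        dsimp only
        rw [Real.rpow_def_of_pos hx.1, mul_comm]
      rw [h1, ← MeasureTheory.integral_Ioc_eq_integral_Ioo,
        ← intervalIntegral.integral_of_le (zero_le_one)]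
      rw [integral_rpow (Or.inl (by linarith))]
      rw [Real.one_rpow, Real.zero_rpow (by linarith)]
      ring
    rw [hstep]
    have hle : (n : ℝ) ≤ (n : ℝ) + 1 := by linarith
    rw [← intervalIntegral.integral_of_le hle]
    have hcomp := intervalIntegral.integral_comp_add_right (a := (n : ℝ)) (b := (n : ℝ) + 1)
      (fun y => 1 / y) 1
    rw [hcomp]
    rw [integral_one_div (by
      intro h
      rw [Set.uIcc_of_le (by linarith)] at h
      have := h.1
      have := Nat.cast_nonneg (α := ℝ) n
      linarith)]
    rw [show ((n : ℝ) + 1 + 1) = (n : ℝ) + 2 by ring]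
    rw [Real.log_div (by positivity) (by positivity)]
  rw [hleft, hright] at hswap
  exact hswap

lemma f_measurable (n : ℕ) : Measurable (f n) := by
  unfold f
  exact ((measurable_id.pow_const (n + 1)).sub (measurable_id.pow_const n)).div
    (measurable_const.mul Real.measurable_log)

lemma f_bounds {n : ℕ} {x : ℝ} (hx : x ∈ Set.Ioo (0 : ℝ) 1) : 0 ≤ f n x ∧ f n x ≤ 1 := by
  obtain ⟨hx0, hx1⟩ := hx
  have hlog : Real.log x < 0 := Real.log_neg hx0 hx1
  have hnum : x ^ (n + 1) - x ^ n ≤ 0 := by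
    have : x ^ (n + 1) ≤ x ^ n := pow_le_pow_of_le_one (le_of_lt hx0) (le_of_lt hx1)
      (by omega)
    linarith
  have hden : ((n : ℝ) + 1) * Real.log x < 0 :=
    mul_neg_of_pos_of_neg (by positivity) hlog
  unfold f
  constructor
  · rw [div_nonneg_iff]
    exact Or.inr ⟨hnum, le_of_lt hden⟩
  · rw [div_le_one_iff]
    right; right
    refine ⟨hden, ?_⟩
    -- need (n+1) * log x ≤ x^(n+1) - x^n, i.e. -(x^n - x^(n+1)) ≥ (n+1) log x
    have h1 : x ^ n - x ^ (n + 1) = x ^ n * (1 - x) := by ring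
    have h2 : x ^ n * (1 - x) ≤ 1 - x := by
      have hp : x ^ n ≤ 1 := pow_le_one₀ (le_of_lt hx0) (le_of_lt hx1)
      nlinarith
    have h3 : Real.log x ≤ x - 1 := Real.log_le_sub_one_of_pos hx0
    have h4 : ((n : ℝ) + 1) * Real.log x ≤ Real.log x := by
      nlinarith [Nat.cast_nonneg (α := ℝ) n]
    linarith
lemma integrable_f (n : ℕ) : Integrable (f n) (volume.restrict (Set.Ioo (0 : ℝ) 1)) := by
  apply Integrable.mono' (integrable_const (1 : ℝ))
    (f_measurable n).aestronglyMeasurable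
  filter_upwards [ae_restrict_mem measurableSet_Ioo] with x hx
  obtain ⟨h0, h1⟩ := f_bounds (n := n) hx
  rw [Real.norm_eq_abs, abs_of_nonneg h0]
  exact h1

lemma integral_f (n : ℕ) : ∫ x in Set.Ioo (0 : ℝ) 1, f n x = c n := by
  have : ∀ x : ℝ, f n x = (1 / ((n : ℝ) + 1)) * ((x ^ (n + 1) - x ^ n) / Real.log x) := by
    intro x
    unfold f
    simp only [div_eq_mul_inv, mul_inv, one_mul]
    ring
  simp_rw [this]
  rw [MeasureTheory.integral_const_mul, key_integral]
  unfold c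
  ring

lemma hasSum_f {x : ℝ} (hx : x ∈ Set.Ioo (0 : ℝ) 1) :
    HasSum (fun n => f n x) (((1 - x) * Real.log (1 - x)) / (x * Real.log x)) := by
  obtain ⟨hx0, hx1⟩ := hx
  have habs : |x| < 1 := by rw [abs_of_pos hx0]; exact hx1
  have hlog : Real.log x ≠ 0 := ne_of_lt (Real.log_neg hx0 hx1)
  have h := (Real.hasSum_pow_div_log_of_abs_lt_one habs).mul_right
    ((x - 1) / (x * Real.log x))
  have heq : ∀ n : ℕ, x ^ (n + 1) / ((n : ℝ) + 1) * ((x - 1) / (x * Real.log x)) = f n x := by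
    intro n
    unfold f
    have hxne : x ≠ 0 := ne_of_gt hx0
    have hd1 : ((n : ℝ) + 1) * (x * Real.log x) ≠ 0 := by
      apply mul_ne_zero (by positivity) (mul_ne_zero hxne hlog)
    have hd2 : ((n : ℝ) + 1) * Real.log x ≠ 0 := mul_ne_zero (by positivity) hlog
    rw [div_mul_div_comm, div_eq_div_iff hd1 hd2]
    ring
  have hsum : -Real.log (1 - x) * ((x - 1) / (x * Real.log x))
      = ((1 - x) * Real.log (1 - x)) / (x * Real.log x) := by
    ring
  rw [hsum] at h
  have hfe : (fun n : ℕ => x ^ (n + 1) / ((n : ℝ) + 1) * ((x - 1) / (x * Real.log x)))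
      = fun n => f n x := funext heq
  rwa [hfe] at h

lemma lintegral_f (n : ℕ) :
    ∫⁻ x in Set.Ioo (0 : ℝ) 1, ‖f n x‖₊ = ENNReal.ofReal (c n) := by
  show ∫⁻ x in Set.Ioo (0 : ℝ) 1, ‖f n x‖ₑ = _
  rw [← MeasureTheory.ofReal_integral_norm_eq_lintegral_enorm (integrable_f n)]
  congr 1
  rw [← integral_f n]
  apply setIntegral_congr_fun measurableSet_Ioo
  intro x hx
  exact norm_of_nonneg (f_bounds hx).1

lemma partial_sum_eq (N : ℕ) :
    ∑ n ∈ Finset.range N, Real.log ((n : ℝ) + 2) / (((n : ℝ) + 1) * ((n : ℝ) + 2))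
      = (∑ n ∈ Finset.range N, c n) - Real.log ((N : ℝ) + 1) / ((N : ℝ) + 1) := by
  induction N with
  | zero => simp
  | succ N ih =>
    rw [Finset.sum_range_succ, Finset.sum_range_succ, ih]
    push_cast
    unfold c
    have h1 : ((N : ℝ) + 1) ≠ 0 := by positivity
    have h2 : ((N : ℝ) + 2) ≠ 0 := by positivity
    have h3 : ((N : ℝ) + 1 + 1) = ((N : ℝ) + 2) := by ring
    rw [h3]
    field_simp
    ring

lemma tendsto_log_div : Tendsto (fun N : ℕ => Real.log ((N : ℝ) + 1) / ((N : ℝ) + 1))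
    atTop (nhds 0) := by
  have h := (Real.tendsto_pow_log_div_mul_add_atTop 1 0 1 one_ne_zero).comp
    (tendsto_atTop_add_const_right atTop (1 : ℝ) tendsto_natCast_atTop_atTop)
  simpa [Function.comp_def] using h

lemma tsum_a_eq : ∑' n : ℕ, Real.log ((n : ℝ) + 2) / (((n : ℝ) + 1) * ((n : ℝ) + 2))
    = ∑' n, c n := by
  have hnn : ∀ n : ℕ, 0 ≤ Real.log ((n : ℝ) + 2) / (((n : ℝ) + 1) * ((n : ℝ) + 2)) := by
    intro n
    apply div_nonneg _ (by positivity)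
    apply Real.log_nonneg
    linarith [Nat.cast_nonneg (α := ℝ) n]
  have hT : Tendsto (fun N => ∑ n ∈ Finset.range N, c n) atTop (nhds (∑' n, c n)) :=
    summable_c.hasSum.tendsto_sum_nat
  have hS : Tendsto (fun N => ∑ n ∈ Finset.range N,
      Real.log ((n : ℝ) + 2) / (((n : ℝ) + 1) * ((n : ℝ) + 2))) atTop (nhds (∑' n, c n)) := by
    simp_rw [partial_sum_eq]
    have := hT.sub tendsto_log_div
    simpa using this
  exact ((hasSum_iff_tendsto_nat_of_nonneg hnn _).2 hS).tsum_eq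

end Stmt10Aux

theorem stmt_10 :
    ∑' n : ℕ, Real.log (n + 2) / ((n + 1) * (n + 2))
      = ∫ x in Set.Ioo (0 : ℝ) 1, ((1 - x) * Real.log (1 - x)) / (x * Real.log x) := by
  open Stmt10Aux in
  rw [Stmt10Aux.tsum_a_eq]
  have h1 : ∀ n : ℕ, Stmt10Aux.c n = ∫ x in Set.Ioo (0 : ℝ) 1, Stmt10Aux.f n x :=
    fun n => (Stmt10Aux.integral_f n).symm
  rw [tsum_congr h1]
  rw [← MeasureTheory.integral_tsum
    (fun n => (Stmt10Aux.f_measurable n).aestronglyMeasurable)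
    (by
      have : ∀ n : ℕ, ∫⁻ x in Set.Ioo (0 : ℝ) 1, ‖Stmt10Aux.f n x‖₊
          = ENNReal.ofReal (Stmt10Aux.c n) := Stmt10Aux.lintegral_f
      show ∑' n : ℕ, ∫⁻ x in Set.Ioo (0 : ℝ) 1, (‖Stmt10Aux.f n x‖₊ : ENNReal) ∂volume ≠ ⊤
      rw [tsum_congr this, ← ENNReal.ofReal_tsum_of_nonneg Stmt10Aux.c_nonneg
        Stmt10Aux.summable_c]
      exact ENNReal.ofReal_ne_top)]
  apply setIntegral_congr_fun measurableSet_Ioo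
  intro x hx
  exact (Stmt10Aux.hasSum_f hx).tsum_eq
end

section
/- For every real a > −1, ∫_0^1 u^a · log(−log u) du = −(γ + log(1+a))/(1+a). -/
open MeasureTheory Set Real Filter

lemma aux_mellin_conv :
    MellinConvergent (fun t : ℝ => Real.log t • ((Real.exp (-t) : ℝ) : ℂ)) 1 := by
  refine (mellin_hasDerivAt_of_isBigO_rpow (E := ℂ) (a := 2) (b := 0)
    (f := fun x : ℝ => ((Real.exp (-x) : ℝ) : ℂ)) (s := 1) ?_ ?_ (by norm_num) ?_
    (by norm_num)).1
  · refine (Continuous.continuousOn ?_).locallyIntegrableOn measurableSet_Ioi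
    exact Complex.continuous_ofReal.comp (Real.continuous_exp.comp continuous_neg)
  · rw [← Asymptotics.isBigO_norm_left]
    simp_rw [Complex.norm_real,
      Asymptotics.isBigO_norm_left]
    simpa only [neg_one_mul] using (isLittleO_exp_neg_mul_rpow_atTop zero_lt_one _).isBigO
  · simp_rw [neg_zero, rpow_zero]
    refine Asymptotics.isBigO_const_of_tendsto (?_ : Tendsto _ _ (nhds (1 : ℂ))) one_ne_zero
    rw [(by simp : (1 : ℂ) = Real.exp (-0))]
    exact (Complex.continuous_ofReal.comp
      (Real.continuous_exp.comp continuous_neg)).continuousWithinAt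

lemma aux_integrableOn :
    IntegrableOn (fun t : ℝ => Real.exp (-t) * Real.log t) (Set.Ioi 0) := by
  have h := aux_mellin_conv
  rw [MellinConvergent] at h
  have h2 : IntegrableOn (fun t : ℝ => ((Real.exp (-t) * Real.log t : ℝ) : ℂ))
      (Set.Ioi 0) := by
    refine h.congr_fun (fun t ht => ?_) measurableSet_Ioi
    simp [Complex.real_smul, mul_comm]
  have h3 : IntegrableOn (fun t : ℝ => RCLike.re ((Real.exp (-t) * Real.log t : ℝ) : ℂ))
      (Set.Ioi 0) := h2.re
  refine h3.congr_fun (fun t ht => ?_) measurableSet_Ioi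
  simp only [RCLike.re_to_complex, Complex.ofReal_re]

lemma aux_integral_exp_neg_log :
    ∫ t in Set.Ioi (0 : ℝ), Real.exp (-t) * Real.log t
      = -Real.eulerMascheroniConstant := by
  have hd := Complex.hasDerivAt_GammaIntegral (s := 1) (by norm_num)
  have heq : (∫ t : ℝ in Set.Ioi 0, (t : ℂ) ^ ((1 : ℂ) - 1) * (Real.log t * Real.exp (-t)))
      = ((∫ t in Set.Ioi (0 : ℝ), Real.exp (-t) * Real.log t : ℝ) : ℂ) := by
    have step : (∫ t : ℝ in Set.Ioi 0, (t : ℂ) ^ ((1 : ℂ) - 1) * (Real.log t * Real.exp (-t)))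
        = ∫ t in Set.Ioi (0 : ℝ), ((Real.exp (-t) * Real.log t : ℝ) : ℂ) := by
      refine setIntegral_congr_fun measurableSet_Ioi (fun t ht => ?_)
      rw [sub_self, Complex.cpow_zero, one_mul]
      push_cast
      ring
    rw [step]
    exact integral_ofReal
  rw [heq] at hd
  have hg : HasDerivAt Complex.Gamma
      ((∫ t in Set.Ioi (0 : ℝ), Real.exp (-t) * Real.log t : ℝ) : ℂ) 1 := by
    refine hd.congr_of_eventuallyEq ?_
    have hopen : IsOpen {z : ℂ | 0 < z.re} := isOpen_lt continuous_const Complex.continuous_re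
    filter_upwards [hopen.mem_nhds (by norm_num : (0:ℝ) < (1:ℂ).re)] with z hz
    exact Complex.Gamma_eq_integral hz
  have hr : HasDerivAt Real.Gamma
      (∫ t in Set.Ioi (0 : ℝ), Real.exp (-t) * Real.log t) 1 := by
    have := hg.real_of_complex
    simp only [Complex.ofReal_re] at this
    exact this
  exact hr.unique Real.hasDerivAt_Gamma_one

theorem stmt_11 (a : ℝ) (ha : -1 < a) :
    ∫ u in Set.Ioo (0 : ℝ) 1, u ^ a * Real.log (-Real.log u)
      = -(Real.eulerMascheroniConstant + Real.log (1 + a)) / (1 + a) := by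
  set c : ℝ := 1 + a with hc_def
  have hc : 0 < c := by simp only [hc_def]; linarith
  set f : ℝ → ℝ := fun t => Real.exp (-(t / c)) with hf_def
  have hderiv : ∀ t ∈ Set.Ioi (0 : ℝ),
      HasDerivWithinAt f (-(1 / c) * Real.exp (-(t / c))) (Set.Ioi 0) t := by
    intro t _
    have h1 : HasDerivAt (fun t : ℝ => -(t / c)) (-(1 / c)) t := by
      exact ((hasDerivAt_id' t).div_const c).neg
    have := (Real.hasDerivAt_exp (-(t / c))).comp t h1
    have h3 := this.hasDerivWithinAt (s := Set.Ioi 0); rw [mul_comm] at h3; exact h3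
  have hinj : Set.InjOn f (Set.Ioi 0) := by
    intro x _ y _ h
    have h2 := Real.exp_injective h
    have h3 : x / c = y / c := by linarith [neg_injective h2]
    field_simp at h3
    exact h3
  have himg : f '' Set.Ioi 0 = Set.Ioo (0 : ℝ) 1 := by
    ext x
    constructor
    · rintro ⟨t, ht, rfl⟩
      have ht' : (0:ℝ) < t := ht
      refine ⟨Real.exp_pos _, Real.exp_lt_one_iff.mpr ?_⟩
      have : 0 < t / c := div_pos ht' hc
      linarith
    · rintro ⟨hx0, hx1⟩
      refine ⟨-c * Real.log x, ?_, ?_⟩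
      · have hlx : Real.log x < 0 := Real.log_neg hx0 hx1
        have := mul_pos hc (neg_pos.mpr hlx)
        simpa [mul_comm, neg_mul] using this
      · simp only [hf_def]
        rw [show -(-c * Real.log x / c) = Real.log x by field_simp]
        exact Real.exp_log hx0
  have key := integral_image_eq_integral_abs_deriv_smul measurableSet_Ioi hderiv hinj
    (fun u => u ^ a * Real.log (-Real.log u))
  rw [himg] at key
  rw [key]
  have hEq : ∀ t ∈ Set.Ioi (0 : ℝ),
      |(-(1 / c) * Real.exp (-(t / c)))| • (f t ^ a * Real.log (-Real.log (f t)))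
        = c⁻¹ * (Real.exp (-t) * Real.log t) - (c⁻¹ * Real.log c) * Real.exp (-t) := by
    intro t ht
    have ht0 : (0 : ℝ) < t := ht
    have h1 : |(-(1 / c) * Real.exp (-(t / c)))| = c⁻¹ * Real.exp (-(t / c)) := by
      rw [abs_mul, abs_neg, abs_of_pos (by positivity : (0:ℝ) < 1/c),
        abs_of_pos (Real.exp_pos _), one_div]
    have hlog : -Real.log (f t) = t / c := by
      simp only [hf_def, Real.log_exp, neg_neg]
    have h2 : f t ^ a = Real.exp (-(t / c) * a) := by
      simp only [hf_def]
      rw [Real.rpow_def_of_pos (Real.exp_pos _), Real.log_exp]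
    have hexp : Real.exp (-(t / c)) * Real.exp (-(t / c) * a) = Real.exp (-t) := by
      rw [← Real.exp_add]
      congr 1
      field_simp
      ring
    rw [h1, h2, hlog, smul_eq_mul, Real.log_div ht0.ne' hc.ne']
    linear_combination (c⁻¹ * (Real.log t - Real.log c)) * hexp
  rw [setIntegral_congr_fun measurableSet_Ioi hEq]
  have hint2 : IntegrableOn (fun t : ℝ => Real.exp (-t)) (Set.Ioi 0) := by
    simpa using exp_neg_integrableOn_Ioi (0 : ℝ) zero_lt_one
  rw [integral_sub (aux_integrableOn.const_mul _) (hint2.const_mul _)]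
  rw [MeasureTheory.integral_const_mul, MeasureTheory.integral_const_mul, aux_integral_exp_neg_log,
    integral_exp_neg_Ioi_zero]
  field_simp
  ring
end

section
/- ∫_0^1 log(−log u) · log(1−u) du = γ + ∑_{n=1}^∞ log(n+1)/(n(n+1)). -/
open Real MeasureTheory Set Filter

-- substitution lemma
lemma img_exp : (fun t : ℝ => Real.exp (-t)) '' Ioi 0 = Ioo (0:ℝ) 1 := by
  ext y
  constructor
  · rintro ⟨t, ht, rfl⟩
    exact ⟨Real.exp_pos _, by rw [Real.exp_lt_one_iff]; linarith [mem_Ioi.1 ht]⟩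
  · rintro ⟨h0, h1⟩
    exact ⟨-Real.log y, by simpa using Real.log_neg h0 h1, by simp [Real.exp_log h0]⟩

lemma deriv_exp_neg (x : ℝ) : HasDerivAt (fun t : ℝ => Real.exp (-t)) (-Real.exp (-x)) x := by
  have h := (Real.hasDerivAt_exp (-x)).comp x (hasDerivAt_neg x); rw [mul_neg_one] at h; exact h

lemma inj_exp : InjOn (fun t : ℝ => Real.exp (-t)) (Ioi 0) := fun a _ b _ h => by
  have := Real.exp_injective h; linarith

lemma sub_exp (g : ℝ → ℝ) :
    ∫ u in Ioo (0:ℝ) 1, g u = ∫ t in Ioi (0:ℝ), Real.exp (-t) * g (Real.exp (-t)) := by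
  rw [← img_exp, integral_image_eq_integral_abs_deriv_smul measurableSet_Ioi
      (fun x _ => (deriv_exp_neg x).hasDerivWithinAt) inj_exp]
  simp [abs_of_pos (Real.exp_pos _)]

lemma sub_exp_int (g : ℝ → ℝ) :
    IntegrableOn g (Ioo (0:ℝ) 1) ↔
      IntegrableOn (fun t => Real.exp (-t) * g (Real.exp (-t))) (Ioi (0:ℝ)) := by
  rw [← img_exp, integrableOn_image_iff_integrableOn_abs_deriv_smul measurableSet_Ioi
      (fun x _ => (deriv_exp_neg x).hasDerivWithinAt) inj_exp]
  simp only [abs_neg, abs_of_pos (Real.exp_pos _), smul_eq_mul]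


lemma abs_log_le (t : ℝ) (ht : 0 < t) : |Real.log t| ≤ 2 * t ^ (-(1/2) : ℝ) + t := by
  rcases le_or_gt 1 t with h | h
  · rw [abs_of_nonneg (Real.log_nonneg h)]
    have := Real.log_le_sub_one_of_pos ht
    have : Real.log t ≤ t := by linarith
    have hp : 0 ≤ 2 * t ^ (-(1/2) : ℝ) := by positivity
    linarith
  · rw [abs_of_nonpos (Real.log_nonpos ht.le h.le)]
    have h1 : -Real.log t = 2 * Real.log (t ^ (-(1/2) : ℝ)) := by
      rw [Real.log_rpow ht]; ring
    have h2 : Real.log (t ^ (-(1/2) : ℝ)) ≤ t ^ (-(1/2) : ℝ) := by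
      have := Real.log_le_sub_one_of_pos (Real.rpow_pos_of_pos ht (-(1/2) : ℝ))
      linarith
    have : (0:ℝ) ≤ t := ht.le
    nlinarith

lemma int_exp_abs_log : IntegrableOn (fun t : ℝ => Real.exp (-t) * |Real.log t|) (Ioi 0) := by
  have h1 : IntegrableOn (fun t : ℝ => t ^ (-(1/2) : ℝ) * Real.exp (-t)) (Ioi 0) := by
    have := integrableOn_rpow_mul_exp_neg_rpow (p := 1) (s := -(1/2)) (by norm_num) one_pos
    refine this.congr_fun (fun x hx => by simp only [Real.rpow_one]) measurableSet_Ioi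
  have h2 : IntegrableOn (fun t : ℝ => t ^ (1 : ℝ) * Real.exp (-t)) (Ioi 0) := by
    have := integrableOn_rpow_mul_exp_neg_rpow (p := 1) (s := 1) (by norm_num) one_pos
    refine this.congr_fun (fun x hx => by simp only [Real.rpow_one]) measurableSet_Ioi
  have hbound : IntegrableOn (fun t : ℝ => 2 * (t ^ (-(1/2) : ℝ) * Real.exp (-t)) + t ^ (1:ℝ) * Real.exp (-t)) (Ioi 0) :=
    (h1.const_mul 2).add h2
  refine hbound.mono' ?_ ?_
  · exact ((Real.measurable_exp.comp measurable_neg).mul Real.measurable_log.abs).aestronglyMeasurable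
  · filter_upwards [ae_restrict_mem measurableSet_Ioi] with t ht
    have ht : (0:ℝ) < t := ht
    have he : 0 < Real.exp (-t) := Real.exp_pos _
    have hle : Real.exp (-t) ≤ 1 := Real.exp_le_one_iff.2 (by linarith)
    rw [Real.norm_eq_abs, abs_of_nonneg (by positivity)]
    calc Real.exp (-t) * |Real.log t| ≤ Real.exp (-t) * (2 * t ^ (-(1/2):ℝ) + t) := by
          exact mul_le_mul_of_nonneg_left (abs_log_le t ht) he.le
      _ ≤ 2 * (t ^ (-(1/2):ℝ) * Real.exp (-t)) + t ^ (1:ℝ) * Real.exp (-t) := by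
          rw [Real.rpow_one]; nlinarith [Real.rpow_pos_of_pos ht (-(1/2):ℝ)]

lemma int_exp_mul_log {a : ℝ} (ha : 1 ≤ a) :
    IntegrableOn (fun t : ℝ => Real.exp (-(a * t)) * Real.log t) (Ioi 0) := by
  refine int_exp_abs_log.mono' ?_ ?_
  · exact ((Real.measurable_exp.comp (measurable_const_mul a).neg).mul
      Real.measurable_log).aestronglyMeasurable
  · filter_upwards [ae_restrict_mem measurableSet_Ioi] with t ht
    have ht : (0:ℝ) < t := ht
    rw [Real.norm_eq_abs, abs_mul, abs_of_pos (Real.exp_pos _)]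
    have : Real.exp (-(a*t)) ≤ Real.exp (-t) := by
      apply Real.exp_le_exp.2; nlinarith
    exact mul_le_mul_of_nonneg_right this (abs_nonneg _)

lemma integral_exp_neg_log : ∫ t : ℝ in Ioi 0, Real.exp (-t) * Real.log t = -Real.eulerMascheroniConstant := by
  have h1 : HasDerivAt Complex.GammaIntegral
      (∫ t : ℝ in Ioi 0, (t : ℂ) ^ ((1:ℂ) - 1) * (Real.log t * Real.exp (-t))) 1 :=
    Complex.hasDerivAt_GammaIntegral (by norm_num)
  have h2 : HasDerivAt Complex.GammaIntegral (-(Real.eulerMascheroniConstant : ℂ)) 1 := by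
    have heq : ∀ᶠ s : ℂ in nhds 1, Complex.Gamma s = Complex.GammaIntegral s := by
      have hopen : IsOpen {s : ℂ | 0 < s.re} := isOpen_lt continuous_const Complex.continuous_re
      filter_upwards [hopen.mem_nhds (by norm_num : (0:ℝ) < (1:ℂ).re)] with s hs
      exact Complex.Gamma_eq_integral hs
    exact Complex.hasDerivAt_Gamma_one.congr_of_eventuallyEq (heq.mono (fun s hs => hs.symm))
  have h3 := h2.unique h1
  have h5 : (∫ t : ℝ in Ioi 0, (t : ℂ) ^ ((1:ℂ) - 1) * (Real.log t * Real.exp (-t)))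
      = ∫ t : ℝ in Ioi 0, ((Real.exp (-t) * Real.log t : ℝ) : ℂ) := by
    refine setIntegral_congr_fun measurableSet_Ioi (fun t ht => ?_)
    rw [sub_self, Complex.cpow_zero, one_mul]
    push_cast
    ring
  have h6 : (∫ t : ℝ in Ioi 0, ((Real.exp (-t) * Real.log t : ℝ) : ℂ))
      = ((∫ t : ℝ in Ioi 0, Real.exp (-t) * Real.log t : ℝ) : ℂ) := integral_ofReal
  rw [h5, h6] at h3
  exact_mod_cast h3.symm


noncomputable def C0 : ℝ := ∫ t : ℝ in Ioi 0, Real.exp (-t) * |Real.log t|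

lemma int_exp_one_log : IntegrableOn (fun t : ℝ => Real.exp (-t) * Real.log t) (Ioi 0) := by
  have := int_exp_mul_log le_rfl
  refine this.congr_fun (fun x _ => by simp only [one_mul]) measurableSet_Ioi

lemma scaled_integral {a : ℝ} (ha : 1 ≤ a) :
    ∫ t : ℝ in Ioi 0, Real.exp (-(a * t)) * Real.log t
      = -((Real.eulerMascheroniConstant + Real.log a) / a) := by
  have ha0 : 0 < a := lt_of_lt_of_le one_pos ha
  have key : ∫ t : ℝ in Ioi 0, Real.exp (-(a * t)) * Real.log t
      = ∫ t : ℝ in Ioi 0, (fun x => Real.exp (-x) * (Real.log x - Real.log a)) (a * t) := by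
    refine setIntegral_congr_fun measurableSet_Ioi (fun t ht => ?_)
    have ht : (0:ℝ) < t := ht
    simp only []
    rw [Real.log_mul ha0.ne' ht.ne']
    ring_nf
  rw [key, integral_comp_mul_left_Ioi (fun x => Real.exp (-x) * (Real.log x - Real.log a)) 0 ha0, mul_zero]
  have hint : ∫ x : ℝ in Ioi 0, Real.exp (-x) * (Real.log x - Real.log a)
      = -Real.eulerMascheroniConstant - Real.log a := by
    have h1 : ∫ x : ℝ in Ioi 0, (Real.exp (-x) * Real.log x - Real.log a * Real.exp (-x))
        = (∫ x : ℝ in Ioi 0, Real.exp (-x) * Real.log x)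
          - ∫ x : ℝ in Ioi 0, Real.log a * Real.exp (-x) := by
      refine integral_sub int_exp_one_log ?_
      exact ((exp_neg_integrableOn_Ioi 0 one_pos).congr_fun
        (fun x _ => by simp only [neg_one_mul]) measurableSet_Ioi).const_mul _
    have h2 : ∫ x : ℝ in Ioi 0, Real.log a * Real.exp (-x) = Real.log a := by
      rw [integral_const_mul, integral_exp_neg_Ioi_zero, mul_one]
    calc ∫ x : ℝ in Ioi 0, Real.exp (-x) * (Real.log x - Real.log a)
        = ∫ x : ℝ in Ioi 0, (Real.exp (-x) * Real.log x - Real.log a * Real.exp (-x)) := by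
          refine setIntegral_congr_fun measurableSet_Ioi (fun x _ => by ring)
      _ = -Real.eulerMascheroniConstant - Real.log a := by
          rw [h1, h2, integral_exp_neg_log]
  rw [hint, smul_eq_mul]
  field_simp
  ring

lemma scaled_abs_integral {a : ℝ} (ha : 1 ≤ a) :
    ∫ t : ℝ in Ioi 0, Real.exp (-(a * t)) * |Real.log t| ≤ (C0 + Real.log a) / a := by
  have ha0 : 0 < a := lt_of_lt_of_le one_pos ha
  have key : ∫ t : ℝ in Ioi 0, Real.exp (-(a * t)) * |Real.log t|
      = ∫ t : ℝ in Ioi 0, (fun x => Real.exp (-x) * |Real.log x - Real.log a|) (a * t) := by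
    refine setIntegral_congr_fun measurableSet_Ioi (fun t ht => ?_)
    have ht : (0:ℝ) < t := ht
    simp only []
    rw [Real.log_mul ha0.ne' ht.ne']
    ring_nf
  rw [key, integral_comp_mul_left_Ioi (fun x => Real.exp (-x) * |Real.log x - Real.log a|) 0 ha0, mul_zero, smul_eq_mul]
  have hexp : IntegrableOn (fun x : ℝ => Real.exp (-x)) (Ioi 0) :=
    (exp_neg_integrableOn_Ioi 0 one_pos).congr_fun (fun x _ => by simp only [neg_one_mul]) measurableSet_Ioi
  have hG : IntegrableOn (fun x : ℝ => Real.exp (-x) * (Real.log x - Real.log a)) (Ioi 0) := by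
    have h := int_exp_one_log.sub (hexp.const_mul (Real.log a))
    refine IntegrableOn.congr_fun h (fun x _ => ?_) measurableSet_Ioi
    simp only [Pi.sub_apply]
    ring
  have hintg : IntegrableOn (fun x : ℝ => Real.exp (-x) * |Real.log x - Real.log a|) (Ioi 0) := by
    refine IntegrableOn.congr_fun hG.abs (fun x _ => ?_) measurableSet_Ioi
    rw [abs_mul, abs_of_pos (Real.exp_pos _)]
  have hbd : ∫ x : ℝ in Ioi 0, Real.exp (-x) * |Real.log x - Real.log a| ≤ C0 + Real.log a := by
    have hexp : IntegrableOn (fun x : ℝ => Real.exp (-x)) (Ioi 0) :=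
      (exp_neg_integrableOn_Ioi 0 one_pos).congr_fun (fun x _ => by simp only [neg_one_mul]) measurableSet_Ioi
    have hmaj : IntegrableOn (fun x : ℝ => Real.exp (-x) * |Real.log x| + Real.log a * Real.exp (-x)) (Ioi 0) :=
      int_exp_abs_log.add (hexp.const_mul _)
    have hle := setIntegral_mono_on hintg hmaj measurableSet_Ioi (fun x hx => by
      have hla : 0 ≤ Real.log a := Real.log_nonneg ha
      have h1 : |Real.log x - Real.log a| ≤ |Real.log x| + Real.log a := by
        calc |Real.log x - Real.log a| ≤ |Real.log x| + |Real.log a| := abs_sub _ _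
          _ = |Real.log x| + Real.log a := by rw [abs_of_nonneg hla]
      nlinarith [Real.exp_pos (-x), mul_le_mul_of_nonneg_left h1 (Real.exp_pos (-x)).le])
    have heq : ∫ x : ℝ in Ioi 0, (Real.exp (-x) * |Real.log x| + Real.log a * Real.exp (-x))
        = C0 + Real.log a := by
      rw [integral_add int_exp_abs_log (hexp.const_mul _),
        integral_const_mul, integral_exp_neg_Ioi_zero, mul_one]
      rfl
    linarith [hle, heq.le, heq.ge]
  have h0 : 0 ≤ (a:ℝ)⁻¹ := by positivity
  calc a⁻¹ * ∫ x : ℝ in Ioi 0, Real.exp (-x) * |Real.log x - Real.log a|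
      ≤ a⁻¹ * (C0 + Real.log a) := mul_le_mul_of_nonneg_left hbd h0
    _ = (C0 + Real.log a) / a := by rw [div_eq_inv_mul]

lemma hasSum_tele : HasSum (fun n : ℕ => 1 / (((n:ℝ)+1) * ((n:ℝ)+2))) 1 := by
  rw [hasSum_iff_tendsto_nat_of_nonneg (fun n => by positivity)]
  have heq : ∀ n : ℕ, ∑ i ∈ Finset.range n, 1 / (((i:ℝ)+1) * ((i:ℝ)+2))
      = 1 - 1/((n:ℝ)+1) := by
    intro n
    have : ∀ i : ℕ, 1 / (((i:ℝ)+1) * ((i:ℝ)+2)) = 1/((i:ℝ)+1) - 1/(((i+1:ℕ):ℝ)+1) := by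
      intro i
      push_cast
      have h1 : ((i:ℝ)+1) ≠ 0 := by positivity
      have h2 : ((i:ℝ)+2) ≠ 0 := by positivity
      have h3 : ((i:ℝ)+1+1) = (i:ℝ)+2 := by ring
      rw [h3, div_sub_div _ _ h1 h2, div_eq_div_iff (by positivity) (by positivity)]
      ring
    rw [Finset.sum_congr rfl (fun i _ => this i), Finset.sum_range_sub' (fun i => 1/((i:ℝ)+1))]
    norm_num
  simp only [heq]
  have : Tendsto (fun n : ℕ => 1/((n:ℝ)+1)) atTop (nhds 0) := by
    exact tendsto_one_div_add_atTop_nhds_zero_nat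
  simpa using (tendsto_const_nhds (x := (1:ℝ))).sub this

lemma log_le_two_sqrt_s12 {x : ℝ} (hx : 1 ≤ x) : Real.log x ≤ 2 * x ^ ((1:ℝ)/2) := by
  have hx0 : 0 < x := lt_of_lt_of_le one_pos hx
  have h1 : Real.log x = 2 * Real.log (x ^ ((1:ℝ)/2)) := by
    rw [Real.log_rpow hx0]; ring
  have h2 : Real.log (x ^ ((1:ℝ)/2)) ≤ x ^ ((1:ℝ)/2) := by
    have := Real.log_le_sub_one_of_pos (Real.rpow_pos_of_pos hx0 ((1:ℝ)/2))
    linarith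
  linarith

lemma summable_log_term : Summable (fun n : ℕ => Real.log ((n:ℝ) + 2) / (((n:ℝ) + 1) * ((n:ℝ) + 2))) := by
  have hsum : Summable (fun n : ℕ => 2 * (1 / (((n:ℕ):ℝ)+1) ^ ((3:ℝ)/2))) := by
    have h := Real.summable_one_div_nat_rpow.2 (by norm_num : (1:ℝ) < 3/2)
    exact ((summable_nat_add_iff 1).2 h).mul_left 2 |>.congr (fun n => by push_cast; norm_num)
  refine Summable.of_nonneg_of_le (fun n => div_nonneg (Real.log_nonneg (by push_cast; linarith [Nat.cast_nonneg (α := ℝ) n])) (by positivity)) (fun n => ?_) hsum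
  have h2 : (0:ℝ) < (n:ℝ) + 2 := by positivity
  have h1 : (0:ℝ) < (n:ℝ) + 1 := by positivity
  have hlog : Real.log ((n:ℝ)+2) ≤ 2 * ((n:ℝ)+2) ^ ((1:ℝ)/2) := log_le_two_sqrt_s12 (by linarith)
  have e1 : ((n:ℝ)+2) ^ ((1:ℝ)/2) * ((n:ℝ)+2) ^ ((1:ℝ)/2) = (n:ℝ)+2 := by
    rw [← Real.rpow_add h2]; norm_num
  have e2 : ((n:ℝ)+1) ^ ((3:ℝ)/2) = ((n:ℝ)+1) ^ ((1:ℝ)/2) * ((n:ℝ)+1) := by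
    rw [show (3:ℝ)/2 = 1/2 + 1 by norm_num, Real.rpow_add h1, Real.rpow_one]
  have h3 : ((n:ℝ)+1) ^ ((1:ℝ)/2) ≤ ((n:ℝ)+2) ^ ((1:ℝ)/2) :=
    Real.rpow_le_rpow h1.le (by linarith) (by norm_num)
  have h4 : 0 < ((n:ℝ)+1) ^ ((1:ℝ)/2) := Real.rpow_pos_of_pos h1 _
  have h5 : 0 < ((n:ℝ)+2) ^ ((1:ℝ)/2) := Real.rpow_pos_of_pos h2 _
  have hln : 0 ≤ Real.log ((n:ℝ)+2) := Real.log_nonneg (by linarith)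
  have hgoal : Real.log ((n:ℝ)+2) * (((n:ℝ)+1) ^ ((1:ℝ)/2)) ≤ 2 * ((n:ℝ)+2) := by
    nlinarith
  rw [div_le_iff₀ (by positivity)]
  have hrw : 2 * (1/(((n:ℝ)+1) ^ ((3:ℝ)/2))) * (((n:ℝ)+1) * ((n:ℝ)+2))
      = 2*((n:ℝ)+2) / (((n:ℝ)+1) ^ ((1:ℝ)/2)) := by
    rw [e2]; field_simp
  rw [hrw, le_div_iff₀ h4]
  linarith [hgoal]



noncomputable def fn (n : ℕ) (u : ℝ) : ℝ :=
  Real.log (-Real.log u) * (-(u ^ (n+1) / ((n:ℝ)+1)))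

lemma fn_comp (n : ℕ) {t : ℝ} (ht : 0 < t) :
    Real.exp (-t) * fn n (Real.exp (-t))
      = -(1/((n:ℝ)+1)) * (Real.exp (-(((n:ℝ)+2) * t)) * Real.log t) := by
  unfold fn
  rw [Real.log_exp, neg_neg]
  have hE : Real.exp (-t) ^ (n+1) = Real.exp (((n+1:ℕ):ℝ) * (-t)) := by
    rw [Real.exp_nat_mul]
  have h3 : Real.exp (-(((n:ℝ)+2)*t)) = Real.exp (-t) * Real.exp (((n+1:ℕ):ℝ) * (-t)) := by
    rw [← Real.exp_add]; congr 1; push_cast; ring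
  rw [hE, h3]
  ring

lemma fn_comp' (n : ℕ) {t : ℝ} (ht : 0 < t) :
    Real.exp (-t) * |fn n (Real.exp (-t))|
      = (1/((n:ℝ)+1)) * (Real.exp (-(((n:ℝ)+2) * t)) * |Real.log t|) := by
  unfold fn
  rw [Real.log_exp, neg_neg]
  have hE : Real.exp (-t) ^ (n+1) = Real.exp (((n+1:ℕ):ℝ) * (-t)) := by
    rw [Real.exp_nat_mul]
  have h3 : Real.exp (-(((n:ℝ)+2)*t)) = Real.exp (-t) * Real.exp (((n+1:ℕ):ℝ) * (-t)) := by
    rw [← Real.exp_add]; congr 1; push_cast; ring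
  rw [hE, h3, abs_mul, abs_neg, abs_div,
    abs_of_pos (Real.exp_pos _), abs_of_pos (show (0:ℝ) < (n:ℝ)+1 by positivity)]
  ring

lemma hn2 (n : ℕ) : (1:ℝ) ≤ (n:ℝ) + 2 := by
  have := Nat.cast_nonneg (α := ℝ) n; linarith

lemma fn_integrable (n : ℕ) : IntegrableOn (fn n) (Ioo (0:ℝ) 1) := by
  rw [sub_exp_int]
  have h := (int_exp_mul_log (hn2 n)).const_mul (-(1/((n:ℝ)+1)))
  refine IntegrableOn.congr_fun h (fun t ht => ?_) measurableSet_Ioi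
  exact (fn_comp n ht).symm

lemma fn_integral (n : ℕ) :
    ∫ u in Ioo (0:ℝ) 1, fn n u
      = (Real.eulerMascheroniConstant + Real.log ((n:ℝ)+2)) / (((n:ℝ)+1) * ((n:ℝ)+2)) := by
  rw [sub_exp]
  rw [setIntegral_congr_fun measurableSet_Ioi (fun t ht => fn_comp n (mem_Ioi.1 ht))]
  rw [integral_const_mul, scaled_integral (hn2 n)]
  have h1 : ((n:ℝ)+1) ≠ 0 := by positivity
  have h2 : ((n:ℝ)+2) ≠ 0 := by positivity
  field_simp

lemma fn_norm_integral_le (n : ℕ) :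
    ∫ u in Ioo (0:ℝ) 1, ‖fn n u‖
      ≤ (1/((n:ℝ)+1)) * ((C0 + Real.log ((n:ℝ)+2)) / ((n:ℝ)+2)) := by
  have h := sub_exp (fun u => |fn n u|)
  simp only [Real.norm_eq_abs]
  rw [h, setIntegral_congr_fun measurableSet_Ioi (fun t ht => fn_comp' n (mem_Ioi.1 ht)),
    integral_const_mul]
  have hpos : (0:ℝ) ≤ 1/((n:ℝ)+1) := by positivity
  exact mul_le_mul_of_nonneg_left (scaled_abs_integral (hn2 n)) hpos

lemma summable_norm_integrals :
    Summable (fun n : ℕ => ∫ u in Ioo (0:ℝ) 1, ‖fn n u‖) := by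
  have hM : Summable (fun n : ℕ => (1/((n:ℝ)+1)) * ((C0 + Real.log ((n:ℝ)+2)) / ((n:ℝ)+2))) := by
    have h1 := (hasSum_tele.summable.mul_left C0).add summable_log_term
    refine h1.congr (fun n => ?_)
    have hn1 : ((n:ℝ)+1) ≠ 0 := by positivity
    have hn2 : ((n:ℝ)+2) ≠ 0 := by positivity
    field_simp
  refine Summable.of_nonneg_of_le (fun n => ?_) (fun n => fn_norm_integral_le n) hM
  exact integral_nonneg (fun u => norm_nonneg _)

theorem stmt_12 :
    ∫ u in Set.Ioo (0 : ℝ) 1, Real.log (-Real.log u) * Real.log (1 - u)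
      = Real.eulerMascheroniConstant
          + ∑' n : ℕ, Real.log (n + 2) / ((n + 1) * (n + 2)) := by
  have step1 : ∫ u in Set.Ioo (0 : ℝ) 1, Real.log (-Real.log u) * Real.log (1 - u)
      = ∫ u in Set.Ioo (0 : ℝ) 1, ∑' n : ℕ, fn n u := by
    refine setIntegral_congr_fun measurableSet_Ioo (fun u hu => ?_)
    obtain ⟨h0, h1⟩ := hu
    have habs : |u| < 1 := abs_lt.2 ⟨by linarith, h1⟩
    have hs := Real.hasSum_pow_div_log_of_abs_lt_one habs
    have hs2 := hs.mul_left (-(Real.log (-Real.log u)))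
    have : HasSum (fun n : ℕ => fn n u) (Real.log (-Real.log u) * Real.log (1 - u)) := by
      have e : ∀ n : ℕ, fn n u = -(Real.log (-Real.log u)) * (u ^ (n+1) / ((n:ℝ)+1)) := by
        intro n; unfold fn; push_cast; ring
      have e2 : -(Real.log (-Real.log u)) * -Real.log (1-u)
          = Real.log (-Real.log u) * Real.log (1 - u) := by ring
      rw [← e2]
      exact HasSum.congr_fun hs2 e
    exact this.tsum_eq.symm
  rw [step1]
  have step2 : ∫ u in Set.Ioo (0 : ℝ) 1, ∑' n : ℕ, fn n u
      = ∑' n : ℕ, ∫ u in Set.Ioo (0 : ℝ) 1, fn n u :=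
    (integral_tsum_of_summable_integral_norm (fun n => fn_integrable n) summable_norm_integrals).symm
  rw [step2]
  have step3 : ∀ n : ℕ, ∫ u in Set.Ioo (0 : ℝ) 1, fn n u
      = Real.eulerMascheroniConstant * (1/(((n:ℝ)+1) * ((n:ℝ)+2)))
        + Real.log ((n:ℝ)+2) / (((n:ℝ)+1) * ((n:ℝ)+2)) := by
    intro n
    rw [fn_integral n]
    have hn1 : ((n:ℝ)+1) ≠ 0 := by positivity
    have hn2 : ((n:ℝ)+2) ≠ 0 := by positivity
    field_simp
  rw [tsum_congr step3]
  have hγ := hasSum_tele.mul_left Real.eulerMascheroniConstant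
  have := (hγ.add summable_log_term.hasSum).tsum_eq
  rw [this, mul_one]
end

section
/- ∑_{k=1}^∞ H_k/k! = e·(γ − Ei(−1)), where Ei(−1) = −∫_1^∞ e^{−t}/t dt. -/
open MeasureTheory Set Filter Real intervalIntegral

lemma int_log01 : IntegrableOn (fun t : ℝ => Real.log t) (Ioc 0 1) := by
  have h : IntegrableOn (fun t : ℝ => 2 * t ^ (-(1:ℝ)/2)) (Ioc 0 1) := by
    apply Integrable.const_mul
    have := (intervalIntegral.intervalIntegrable_rpow' (a := (0:ℝ)) (b := 1)
      (by norm_num : (-1:ℝ) < -1/2))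
    simpa [intervalIntegrable_iff, uIoc_of_le (by norm_num : (0:ℝ) ≤ 1), IntegrableOn] using this
  refine h.mono' (Real.measurable_log.aestronglyMeasurable).restrict ?_
  filter_upwards [ae_restrict_mem measurableSet_Ioc] with t ht
  have h0 : 0 < t := ht.1
  rw [Real.norm_eq_abs, abs_of_nonpos (Real.log_nonpos h0.le ht.2)]
  have := Real.log_le_rpow_div (x := t⁻¹) (by positivity) (by norm_num : (0:ℝ) < 1/2)
  rw [Real.log_inv, ← Real.rpow_neg_one t, ← Real.rpow_mul h0.le] at this
  norm_num at this ⊢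
  linarith

lemma int_logexp01 : IntegrableOn (fun t : ℝ => Real.log t * Real.exp (-t)) (Ioc 0 1) := by
  refine int_log01.abs.mono' ?_ ?_
  · exact (Real.measurable_log.mul (by fun_prop)).aestronglyMeasurable.restrict
  · filter_upwards [ae_restrict_mem measurableSet_Ioc] with t ht
    rw [Real.norm_eq_abs, abs_mul]
    calc |Real.log t| * |Real.exp (-t)| ≤ |Real.log t| * 1 := by
          apply mul_le_mul_of_nonneg_left _ (abs_nonneg _)
          rw [abs_of_pos (Real.exp_pos _)]
          exact Real.exp_le_one_iff.mpr (by linarith [ht.1])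
      _ = |Real.log t| := mul_one _

lemma int_texp : IntegrableOn (fun t : ℝ => t * Real.exp (-t)) (Ioi 0) := by
  have := Real.GammaIntegral_convergent (s := 2) (by norm_num)
  refine this.congr_fun (fun t ht => ?_) measurableSet_Ioi
  simp only [show (2:ℝ) - 1 = 1 by norm_num, rpow_one]; ring

lemma int_logexp1i : IntegrableOn (fun t : ℝ => Real.log t * Real.exp (-t)) (Ioi 1) := by
  refine (int_texp.mono_set (Ioi_subset_Ioi (by norm_num))).mono' ?_ ?_
  · exact (Real.measurable_log.mul (by fun_prop)).aestronglyMeasurable.restrict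
  · filter_upwards [ae_restrict_mem measurableSet_Ioi] with t ht
    have h1 : (1:ℝ) < t := ht
    rw [Real.norm_eq_abs, abs_mul, abs_of_nonneg (Real.log_nonneg h1.le),
      abs_of_pos (Real.exp_pos _)]
    have := Real.log_le_sub_one_of_pos (show (0:ℝ) < t by linarith)
    nlinarith [Real.exp_pos (-t)]

lemma int_expdiv1i : IntegrableOn (fun t : ℝ => Real.exp (-t) / t) (Ioi 1) := by
  have base : IntegrableOn (fun t : ℝ => Real.exp (-t)) (Ioi 1) := by
    simpa using exp_neg_integrableOn_Ioi 1 (by norm_num : (0:ℝ) < 1)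
  refine base.mono' ?_ ?_
  · exact ((by fun_prop : Measurable fun t:ℝ => Real.exp (-t)).div measurable_id).aestronglyMeasurable.restrict
  · filter_upwards [ae_restrict_mem measurableSet_Ioi] with t ht
    have h1 : (1:ℝ) < t := ht
    rw [Real.norm_eq_abs, abs_div, abs_of_pos (Real.exp_pos _), abs_of_pos (by linarith)]
    rw [div_le_iff₀ (by linarith)]
    nlinarith [Real.exp_pos (-t)]

lemma int_onesub : IntegrableOn (fun t : ℝ => (1 - Real.exp (-t)) / t) (Ioc 0 1) := by
  refine (integrableOn_const measure_Ioc_lt_top.ne).mono' (g := fun _ => (1:ℝ)) ?_ ?_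
  · exact ((by fun_prop : Measurable fun t:ℝ => 1 - Real.exp (-t)).div measurable_id).aestronglyMeasurable.restrict
  · filter_upwards [ae_restrict_mem measurableSet_Ioc] with t ht
    have h0 : 0 < t := ht.1
    have h2 : 1 - Real.exp (-t) ≤ t := by nlinarith [Real.add_one_le_exp (-t)]
    have h3 : 0 ≤ 1 - Real.exp (-t) := by nlinarith [Real.exp_le_one_iff.mpr (by linarith : -t ≤ 0)]
    rw [Real.norm_eq_abs, abs_div, abs_of_nonneg h3, abs_of_pos h0, div_le_one h0]
    exact h2

lemma partA : ∫ t in Ioc (0:ℝ) 1, (Real.log t * Real.exp (-t) + (1 - Real.exp (-t)) / t) = 0 := by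
  have key : ∫ t in (0:ℝ)..1, (Real.log t * Real.exp (-t) + (1 - Real.exp (-t)) / t) = 0 - 0 := by
    apply intervalIntegral.integral_eq_sub_of_hasDerivAt_of_tendsto
      (f := fun t => (1 - Real.exp (-t)) * Real.log t) (by norm_num)
    · intro x hx
      have h0 : (0:ℝ) < x := hx.1
      have h1 : HasDerivAt (fun t : ℝ => 1 - Real.exp (-t)) (Real.exp (-x)) x := by
        simpa using ((Real.hasDerivAt_exp (-x)).comp x (hasDerivAt_neg x)).const_sub 1
      have h2 : HasDerivAt Real.log x⁻¹ x := Real.hasDerivAt_log h0.ne'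
      have h3 := h1.mul h2
      refine h3.congr_deriv ?_
      rw [div_eq_mul_inv]; ring
    · rw [intervalIntegrable_iff, uIoc_of_le (by norm_num : (0:ℝ) ≤ 1)]
      exact int_logexp01.add int_onesub
    · -- tendsto at 0+
      have hslope : Tendsto (fun t : ℝ => (1 - Real.exp (-t)) / t) (nhdsWithin 0 (Ioi 0)) (nhds 1) := by
        have h1 : HasDerivAt (fun t : ℝ => 1 - Real.exp (-t)) 1 0 := by
          simpa using ((Real.hasDerivAt_exp (-(0:ℝ))).comp 0 (hasDerivAt_neg 0)).const_sub 1
        have h2 := hasDerivAt_iff_tendsto_slope.mp h1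
        refine Tendsto.congr' ?_ (h2.mono_left (nhdsWithin_mono _ ?_))
        · filter_upwards [self_mem_nhdsWithin] with t (ht : t ∈ Ioi (0:ℝ))
          simp [slope, Real.exp_zero, div_eq_inv_mul]
        · intro x hx; exact ne_of_gt hx
      have hxlog : Tendsto (fun t : ℝ => t * Real.log t) (nhdsWithin 0 (Ioi 0)) (nhds 0) := by
        have h := tendsto_log_mul_rpow_nhdsGT_zero one_pos
        refine Tendsto.congr' ?_ h
        filter_upwards [self_mem_nhdsWithin] with t (ht : t ∈ Ioi (0:ℝ))
        rw [Real.rpow_one]; ring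
      have h4 := hslope.mul hxlog
      rw [mul_zero] at h4
      refine Tendsto.congr' ?_ h4
      filter_upwards [self_mem_nhdsWithin] with t (ht : t ∈ Ioi (0:ℝ))
      have htne : t ≠ 0 := ne_of_gt ht
      field_simp
    · -- tendsto at 1-
      have hc : ContinuousAt (fun t : ℝ => (1 - Real.exp (-t)) * Real.log t) 1 :=
        ContinuousAt.mul (by fun_prop) (Real.continuousAt_log one_ne_zero)
      have h := hc.continuousWithinAt (s := Iio 1)
      simpa [Real.log_one] using h.tendsto
  rw [← intervalIntegral.integral_of_le (by norm_num : (0:ℝ) ≤ 1), key]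
  norm_num

lemma partB : ∫ t in Ioi (1:ℝ), (Real.log t * Real.exp (-t) - Real.exp (-t) / t) = 0 := by
  have key : ∫ t in Ioi (1:ℝ), (Real.log t * Real.exp (-t) - Real.exp (-t) / t)
      = 0 - (-(Real.exp (-1)) * Real.log 1) := by
    apply MeasureTheory.integral_Ioi_of_hasDerivAt_of_tendsto
      (f := fun t => -Real.exp (-t) * Real.log t)
    · exact (ContinuousAt.mul (by fun_prop) (Real.continuousAt_log one_ne_zero)).continuousWithinAt
    · intro x hx
      have h0 : (0:ℝ) < x := lt_trans one_pos hx
      have h1 : HasDerivAt (fun t : ℝ => -Real.exp (-t)) (Real.exp (-x)) x := by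
        exact (((Real.hasDerivAt_exp (-x)).comp x (hasDerivAt_neg x))).neg.congr_deriv (by simp)
      have h2 : HasDerivAt Real.log x⁻¹ x := Real.hasDerivAt_log h0.ne'
      have h3 := h1.mul h2
      refine h3.congr_deriv ?_
      rw [div_eq_mul_inv]; ring
    · exact int_logexp1i.sub int_expdiv1i
    · -- tendsto at top of -exp(-t) log t → 0
      have hb : Tendsto (fun t : ℝ => t * Real.exp (-t)) atTop (nhds 0) := by
        simpa using tendsto_pow_mul_exp_neg_atTop_nhds_zero 1
      have : Tendsto (fun t : ℝ => Real.exp (-t) * Real.log t) atTop (nhds 0) := by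
        apply squeeze_zero' ?_ ?_ hb
        · filter_upwards [eventually_ge_atTop (1:ℝ)] with t ht
          exact mul_nonneg (Real.exp_pos _).le (Real.log_nonneg ht)
        · filter_upwards [eventually_ge_atTop (1:ℝ)] with t ht
          have := Real.log_le_sub_one_of_pos (show (0:ℝ) < t by linarith)
          nlinarith [Real.exp_pos (-t)]
      simpa using this.neg
  rw [key, Real.log_one]
  ring

lemma gammaDeriv : HasDerivAt Real.Gamma (∫ t in Ioi (0:ℝ), Real.log t * Real.exp (-t)) 1 := by
  have h1 := Complex.hasDerivAt_GammaIntegral (s := 1) (by norm_num)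
  have hco := _root_.integral_ofReal (𝕜 := ℂ) (μ := volume.restrict (Ioi (0:ℝ)))
    (f := fun t => Real.log t * Real.exp (-t))
  have hval : (∫ t in Ioi (0:ℝ), (t:ℂ) ^ ((1:ℂ) - 1) * ((Real.log t : ℂ) * (Real.exp (-t) : ℂ)))
      = ∫ t in Ioi (0:ℝ), ((Real.log t * Real.exp (-t) : ℝ) : ℂ) := by
    refine setIntegral_congr_fun measurableSet_Ioi (fun t ht => ?_)
    rw [sub_self, Complex.cpow_zero, one_mul]
    push_cast
    ring
  rw [hval] at h1
  have hcoe : (∫ t in Ioi (0:ℝ), ((Real.log t * Real.exp (-t) : ℝ) : ℂ))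
      = ((∫ t in Ioi (0:ℝ), Real.log t * Real.exp (-t) : ℝ) : ℂ) := by
    norm_cast
  rw [hcoe] at h1
  have h2 : HasDerivAt Complex.Gamma ((∫ t in Ioi (0:ℝ), Real.log t * Real.exp (-t) : ℝ) : ℂ) 1 := by
    refine h1.congr_of_eventuallyEq ?_
    · have hopen : IsOpen {s : ℂ | 0 < s.re} := isOpen_lt continuous_const Complex.continuous_re
      filter_upwards [hopen.mem_nhds (by norm_num : (0:ℝ) < (1:ℂ).re)] with s hs
      exact Complex.Gamma_eq_integral hs
  have h3 := h2.real_of_complex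
  simp only [Complex.ofReal_re] at h3
  refine h3.congr_of_eventuallyEq ?_
  filter_upwards with x
  rw [Complex.Gamma_ofReal, Complex.ofReal_re]

lemma gammaRep : Real.eulerMascheroniConstant
    = (∫ t in Ioc (0:ℝ) 1, (1 - Real.exp (-t)) / t) - ∫ t in Ioi (1:ℝ), Real.exp (-t) / t := by
  have hsplit : (∫ t in Ioi (0:ℝ), Real.log t * Real.exp (-t))
      = (∫ t in Ioc (0:ℝ) 1, Real.log t * Real.exp (-t))
        + ∫ t in Ioi (1:ℝ), Real.log t * Real.exp (-t) := by
    rw [← setIntegral_union (Ioc_disjoint_Ioi le_rfl) measurableSet_Ioi int_logexp01 int_logexp1i,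
      Ioc_union_Ioi_eq_Ioi (by norm_num : (0:ℝ) ≤ 1)]
  have hA : (∫ t in Ioc (0:ℝ) 1, Real.log t * Real.exp (-t))
      = - ∫ t in Ioc (0:ℝ) 1, (1 - Real.exp (-t)) / t := by
    have := partA
    rw [integral_add int_logexp01 int_onesub] at this
    linarith
  have hB : (∫ t in Ioi (1:ℝ), Real.log t * Real.exp (-t))
      = ∫ t in Ioi (1:ℝ), Real.exp (-t) / t := by
    have := partB
    rw [integral_sub int_logexp1i int_expdiv1i] at this
    linarith
  rw [Real.eulerMascheroniConstant_eq_neg_deriv, gammaDeriv.deriv, hsplit, hA, hB]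
  ring

lemma ae_ne_one : ∀ᵐ x : ℝ, x ≠ 1 := by
  rw [ae_iff]
  simpa using Real.volume_singleton (x := (1:ℝ))

lemma gsum_eq {x : ℝ} (hx : x ≠ 1) (n : ℕ) :
    (1 - x ^ n) / (1 - x) = ∑ i ∈ Finset.range n, x ^ i := by
  rw [geom_sum_eq hx, ← neg_sub (x ^ n) 1, ← neg_sub x 1, neg_div_neg_eq]

lemma int_gn (n : ℕ) : IntegrableOn (fun x : ℝ => (1 - x ^ n) / (1 - x)) (Ioc 0 1) := by
  have hcont : IntegrableOn (fun x : ℝ => ∑ i ∈ Finset.range n, x ^ i) (Ioc 0 1) :=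
    (continuous_finset_sum _ fun i _ => continuous_pow i).integrableOn_Ioc
  refine hcont.congr ?_
  filter_upwards [ae_restrict_of_ae ae_ne_one] with x hx
  exact (gsum_eq hx n).symm

lemma harmonic_integral (n : ℕ) :
    ∫ x in Ioc (0:ℝ) 1, (1 - x ^ n) / (1 - x) = (harmonic n : ℝ) := by
  have h1 : ∫ x in Ioc (0:ℝ) 1, (1 - x ^ n) / (1 - x)
      = ∫ x in Ioc (0:ℝ) 1, ∑ i ∈ Finset.range n, x ^ i := by
    refine integral_congr_ae ?_
    filter_upwards [ae_restrict_of_ae ae_ne_one] with x hx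
    exact gsum_eq hx n
  rw [h1, ← intervalIntegral.integral_of_le (by norm_num : (0:ℝ) ≤ 1),
    intervalIntegral.integral_finset_sum (fun i _ => (continuous_pow i).intervalIntegrable 0 1)]
  have : ∀ i ∈ Finset.range n, ∫ x in (0:ℝ)..1, x ^ i = 1 / (i + 1 : ℝ) := by
    intro i _
    rw [integral_pow]
    norm_num
  rw [Finset.sum_congr rfl this, harmonic]
  push_cast
  simp [one_div]

lemma harmonic_le (n : ℕ) : (harmonic n : ℝ) ≤ n := by
  rw [harmonic]
  push_cast
  calc ∑ i ∈ Finset.range n, ((i:ℝ)+1)⁻¹ ≤ ∑ i ∈ Finset.range n, 1 := by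
        refine Finset.sum_le_sum fun i _ => ?_
        rw [← one_div, div_le_one (by positivity)]
        linarith [Nat.cast_nonneg (α := ℝ) i]
    _ = n := by simp

lemma summable_main : Summable (fun k : ℕ => (harmonic (k+1) : ℝ) / (k+1).factorial) := by
  have hb : Summable (fun k : ℕ => (1:ℝ) / k.factorial) := by
    have := NormedSpace.expSeries_div_summable (1:ℝ)
    simpa using this
  refine hb.of_nonneg_of_le (fun k => div_nonneg (by exact_mod_cast (harmonic_pos (Nat.succ_ne_zero k)).le) (by positivity)) (fun k => ?_)
  rw [div_le_div_iff₀ (by positivity) (by positivity)]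
  have h1 : (harmonic (k+1) : ℝ) ≤ (k+1 : ℝ) := by exact_mod_cast (harmonic_le (k+1))
  have h2 : ((k+1).factorial : ℝ) = (k+1) * k.factorial := by
    rw [Nat.factorial_succ]; push_cast; ring
  calc (harmonic (k+1) : ℝ) * k.factorial ≤ (k+1 : ℝ) * k.factorial := by
        exact mul_le_mul_of_nonneg_right h1 (by positivity)
    _ = 1 * ((k+1).factorial : ℝ) := by rw [h2]; ring

lemma gn_nonneg {x : ℝ} (hx : x ∈ Ioc (0:ℝ) 1) (n : ℕ) : 0 ≤ (1 - x ^ n) / (1 - x) := by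
  rcases eq_or_lt_of_le hx.2 with h | h
  · simp [← h]
  · have h1 : x ^ n ≤ 1 := pow_le_one₀ hx.1.le hx.2
    exact div_nonneg (by linarith) (by linarith)

lemma swap_lemma : ∑' k : ℕ, (harmonic (k+1) : ℝ) / (k+1).factorial
    = ∫ x in Ioc (0:ℝ) 1, ∑' k : ℕ, (1 - x ^ (k+1)) / (1 - x) / ((k+1).factorial : ℝ) := by
  have hint : ∀ k : ℕ, Integrable
      (fun x : ℝ => (1 - x ^ (k+1)) / (1 - x) / ((k+1).factorial : ℝ))
      (volume.restrict (Ioc 0 1)) := fun k => (int_gn (k+1)).div_const _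
  have hval : ∀ k : ℕ, ∫ x in Ioc (0:ℝ) 1, (1 - x ^ (k+1)) / (1 - x) / ((k+1).factorial : ℝ)
      = (harmonic (k+1) : ℝ) / (k+1).factorial := by
    intro k
    rw [MeasureTheory.integral_div, harmonic_integral]
  have hnorm : ∀ k : ℕ, (∫ x in Ioc (0:ℝ) 1, ‖(1 - x ^ (k+1)) / (1 - x) / ((k+1).factorial : ℝ)‖)
      = (harmonic (k+1) : ℝ) / (k+1).factorial := by
    intro k
    rw [← hval k]
    refine integral_congr_ae ?_
    filter_upwards [ae_restrict_mem measurableSet_Ioc] with x hx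
    rw [Real.norm_eq_abs, abs_of_nonneg (div_nonneg (gn_nonneg hx _) (by positivity))]
  rw [← MeasureTheory.integral_tsum_of_summable_integral_norm hint
    (summable_main.congr fun k => (hnorm k).symm)]
  exact (tsum_congr hval).symm

lemma exp_tsum (x : ℝ) : ∑' n : ℕ, x ^ n / n.factorial = Real.exp x := by
  rw [Real.exp_eq_exp_ℝ, NormedSpace.exp_eq_tsum_div]

lemma tsum_shift (x : ℝ) : ∑' k : ℕ, x ^ (k+1) / ((k+1).factorial : ℝ) = Real.exp x - 1 := by
  have hs : Summable (fun n : ℕ => x ^ n / n.factorial) := NormedSpace.expSeries_div_summable x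
  have := Summable.tsum_eq_zero_add hs
  rw [exp_tsum] at this
  simp only [pow_zero, Nat.factorial_zero, Nat.cast_one, div_one] at this
  linarith [this]

lemma tsum_pointwise {x : ℝ} (hx1 : x ≠ 1) :
    ∑' k : ℕ, (1 - x ^ (k+1)) / (1 - x) / ((k+1).factorial : ℝ)
      = (Real.exp 1 - Real.exp x) / (1 - x) := by
  have h1 : ∀ k : ℕ, (1 - x ^ (k+1)) / (1 - x) / ((k+1).factorial : ℝ)
      = ((1:ℝ) ^ (k+1) / ((k+1).factorial : ℝ) - x ^ (k+1) / ((k+1).factorial : ℝ)) * (1 - x)⁻¹ := by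
    intro k
    rw [one_pow]
    field_simp
  rw [tsum_congr h1, tsum_mul_right]
  have hs1 : Summable (fun k : ℕ => (1:ℝ) ^ (k+1) / ((k+1).factorial : ℝ)) :=
    (NormedSpace.expSeries_div_summable (1:ℝ)).comp_injective Nat.succ_injective
  have hs2 : Summable (fun k : ℕ => x ^ (k+1) / ((k+1).factorial : ℝ)) :=
    (NormedSpace.expSeries_div_summable x).comp_injective Nat.succ_injective
  rw [Summable.tsum_sub hs1 hs2, tsum_shift, tsum_shift, div_eq_mul_inv]
  ring

lemma final_integral : ∫ x in Ioc (0:ℝ) 1, (Real.exp 1 - Real.exp x) / (1 - x)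
    = Real.exp 1 * ∫ t in Ioc (0:ℝ) 1, (1 - Real.exp (-t)) / t := by
  rw [← intervalIntegral.integral_of_le (by norm_num : (0:ℝ) ≤ 1),
    ← intervalIntegral.integral_of_le (by norm_num : (0:ℝ) ≤ 1)]
  have h1 : ∀ x : ℝ, (Real.exp 1 - Real.exp x) / (1 - x)
      = (fun y => (Real.exp 1 - Real.exp (1 - y)) / y) (1 - x) := by
    intro x
    simp only []
    rw [sub_sub_cancel]
  simp_rw [h1]
  rw [intervalIntegral.integral_comp_sub_left (fun y => (Real.exp 1 - Real.exp (1 - y)) / y) 1]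
  norm_num
  rw [← intervalIntegral.integral_const_mul]
  refine intervalIntegral.integral_congr fun y _ => ?_
  rw [Real.exp_sub]
  rw [Real.exp_neg]
  field_simp

theorem stmt_14 :
    ∑' k : ℕ, (harmonic (k + 1) : ℝ) / (k + 1).factorial
      = Real.exp 1 * (Real.eulerMascheroniConstant
          - (-(∫ t in Set.Ioi (1 : ℝ), Real.exp (-t) / t))) := by
  rw [swap_lemma]
  have h1 : (∫ x in Ioc (0:ℝ) 1, ∑' k : ℕ, (1 - x ^ (k+1)) / (1 - x) / ((k+1).factorial : ℝ))
      = ∫ x in Ioc (0:ℝ) 1, (Real.exp 1 - Real.exp x) / (1 - x) := by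
    refine integral_congr_ae ?_
    filter_upwards [ae_restrict_of_ae ae_ne_one] with x hx
    exact tsum_pointwise hx
  rw [h1, final_integral, gammaRep]
  ring
end

section
/- ∫_0^1 e^t · log(−log t) dt = −∑_{k=1}^∞ (log k)/k! − γ·(e − 1). -/
open MeasureTheory Set Real

-- integrability of exp(-u)|log u| on Ioi 0
lemma L1 : IntegrableOn (fun u : ℝ => Real.exp (-u) * |Real.log u|) (Set.Ioi 0) := by
  have hmeas : AEStronglyMeasurable (fun u : ℝ => Real.exp (-u) * |Real.log u|)
      (volume.restrict (Set.Ioi (0:ℝ))) := by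
    exact ((Real.continuous_exp.comp continuous_neg).measurable.mul
      Real.measurable_log.abs).aestronglyMeasurable
  have h01 : IntegrableOn (fun u : ℝ => Real.exp (-u) * |Real.log u|) (Set.Ioc 0 1) := by
    have hint : IntegrableOn (fun u : ℝ => 2 * u ^ (-(1/2) : ℝ)) (Set.Ioc (0:ℝ) 1) := by
      have := (intervalIntegral.intervalIntegrable_rpow' (a := 0) (b := 1)
        (r := (-(1/2) : ℝ)) (by norm_num))
      rw [intervalIntegrable_iff_integrableOn_Ioc_of_le (by norm_num)] at this
      exact this.const_mul 2
    refine hint.integrable.mono (hmeas.mono_measure ?_) ?_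
    · exact Measure.restrict_mono Set.Ioc_subset_Ioi_self le_rfl
    · filter_upwards [ae_restrict_mem measurableSet_Ioc] with u hu
      obtain ⟨hu0, hu1⟩ := hu
      have hlog : |Real.log u| ≤ 2 * u ^ (-(1/2) : ℝ) := by
        rw [abs_of_nonpos (Real.log_nonpos hu0.le hu1)]
        have h1 : -Real.log u = 2 * Real.log (u ^ (-(1/2) : ℝ)) := by
          rw [Real.log_rpow hu0]; ring
        rw [h1]
        have h2 : Real.log (u ^ (-(1/2) : ℝ)) ≤ u ^ (-(1/2) : ℝ) :=
          (Real.log_le_sub_one_of_pos (rpow_pos_of_pos hu0 _)).trans (by linarith)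
        nlinarith [rpow_pos_of_pos hu0 (-(1/2) : ℝ)]
      have he : Real.exp (-u) ≤ 1 := Real.exp_le_one_iff.mpr (by linarith)
      refine le_trans ?_ (Real.le_norm_self _)
      rw [Real.norm_eq_abs, abs_of_nonneg (mul_nonneg (Real.exp_pos _).le (abs_nonneg _))]
      calc Real.exp (-u) * |Real.log u| ≤ 1 * |Real.log u| := by
            gcongr
        _ = |Real.log u| := one_mul _
        _ ≤ 2 * u ^ (-(1/2) : ℝ) := hlog
  have h1i : IntegrableOn (fun u : ℝ => Real.exp (-u) * |Real.log u|) (Set.Ioi 1) := by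
    have hint : IntegrableOn (fun u : ℝ => 2 * Real.exp (-((1/2) : ℝ) * u)) (Set.Ioi (1:ℝ)) :=
      (exp_neg_integrableOn_Ioi 1 (by norm_num : (0:ℝ) < 1/2)).const_mul 2
    refine hint.integrable.mono (hmeas.mono_measure ?_) ?_
    · exact Measure.restrict_mono (Set.Ioi_subset_Ioi (by norm_num)) le_rfl
    · filter_upwards [ae_restrict_mem measurableSet_Ioi] with u hu
      have hu1 : (1:ℝ) < u := hu
      have hlog0 : 0 ≤ Real.log u := Real.log_nonneg hu1.le
      refine le_trans ?_ (Real.le_norm_self _)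
      rw [Real.norm_eq_abs, abs_of_nonneg (mul_nonneg (Real.exp_pos _).le (abs_nonneg _)),
        abs_of_nonneg hlog0]
      have h2 : Real.log u ≤ u := (Real.log_le_sub_one_of_pos (by linarith)).trans (by linarith)
      have h3 : u ≤ 2 * Real.exp (u/2) := by
        have := Real.add_one_le_exp (u/2)
        nlinarith
      calc Real.exp (-u) * Real.log u ≤ Real.exp (-u) * (2 * Real.exp (u/2)) := by
            have := (Real.exp_pos (-u)).le
            nlinarith
        _ = 2 * Real.exp (-(1/2) * u) := by
            rw [mul_comm 2 (Real.exp (u/2)), ← mul_assoc, ← Real.exp_add]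
            ring_nf
  have : Set.Ioi (0:ℝ) = Set.Ioc 0 1 ∪ Set.Ioi 1 := by
    rw [Set.Ioc_union_Ioi_eq_Ioi]; norm_num
  rw [this]
  exact h01.union h1i

lemma L2 : ∫ u in Set.Ioi (0:ℝ), Real.exp (-u) * Real.log u = -Real.eulerMascheroniConstant := by
  have hopen : IsOpen {s : ℂ | 0 < s.re} := isOpen_lt continuous_const Complex.continuous_re
  have hev : Complex.GammaIntegral =ᶠ[nhds (1:ℂ)] Complex.Gamma := by
    filter_upwards [hopen.mem_nhds (by norm_num : (0:ℝ) < (1:ℂ).re)] with s hs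
    exact (Complex.Gamma_eq_integral hs).symm
  have hG : HasDerivAt Complex.GammaIntegral (-Real.eulerMascheroniConstant : ℂ) 1 :=
    Complex.hasDerivAt_Gamma_one.congr_of_eventuallyEq hev
  have hG2 := Complex.hasDerivAt_GammaIntegral (s := 1) (by norm_num)
  have key : (∫ t : ℝ in Set.Ioi 0, (t:ℂ) ^ ((1:ℂ) - 1) * (Real.log t * Real.exp (-t)))
      = (-Real.eulerMascheroniConstant : ℂ) := hG2.unique hG
  have : (∫ t : ℝ in Set.Ioi 0, (t:ℂ) ^ ((1:ℂ) - 1) * (Real.log t * Real.exp (-t)))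
      = ((∫ u in Set.Ioi (0:ℝ), Real.exp (-u) * Real.log u : ℝ) : ℂ) := by
    refine (setIntegral_congr_fun measurableSet_Ioi (fun t ht => ?_)).trans integral_ofReal
    show (t:ℂ) ^ ((1:ℂ)-1) * (↑(Real.log t) * ↑(Real.exp (-t)))
        = ((Real.exp (-t) * Real.log t : ℝ) : ℂ)
    rw [sub_self, Complex.cpow_zero, one_mul]
    push_cast
    ring
  rw [this] at key
  exact_mod_cast key

lemma L1' {c : ℝ} (hc : 1 ≤ c) :
    IntegrableOn (fun u : ℝ => Real.exp (-(c * u)) * Real.log u) (Set.Ioi 0) := by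
  refine L1.integrable.mono ?_ ?_
  · exact ((Real.continuous_exp.comp (continuous_const.mul continuous_id).neg).measurable.mul
      Real.measurable_log).aestronglyMeasurable
  · filter_upwards [ae_restrict_mem measurableSet_Ioi] with u hu
    have hu0 : (0:ℝ) < u := hu
    rw [Real.norm_eq_abs, Real.norm_eq_abs, abs_mul,
      abs_of_nonneg (Real.exp_pos _).le,
      abs_of_nonneg (mul_nonneg (Real.exp_pos _).le (abs_nonneg _))]
    exact mul_le_mul_of_nonneg_right (Real.exp_le_exp.mpr (by nlinarith)) (abs_nonneg _)

lemma L3 {s : ℝ} (hs : 0 < s) :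
    ∫ u in Set.Ioi (0:ℝ), Real.exp (-(s * u)) * Real.log u
      = (-Real.eulerMascheroniConstant - Real.log s) / s := by
  have key := MeasureTheory.integral_comp_mul_left_Ioi
    (fun v => Real.exp (-v) * (Real.log v - Real.log s)) 0 hs
  have h1 : (∫ u in Set.Ioi (0:ℝ),
      Real.exp (-(s * u)) * (Real.log (s * u) - Real.log s))
      = s⁻¹ • ∫ v in Set.Ioi (0:ℝ), Real.exp (-v) * (Real.log v - Real.log s) := by
    simpa using key
  have h2 : (∫ u in Set.Ioi (0:ℝ), Real.exp (-(s * u)) * Real.log u)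
      = ∫ u in Set.Ioi (0:ℝ), Real.exp (-(s * u)) * (Real.log (s * u) - Real.log s) := by
    refine setIntegral_congr_fun measurableSet_Ioi (fun u hu => ?_)
    rw [Real.log_mul hs.ne' (ne_of_gt hu)]
    ring_nf
  have hIexp : IntegrableOn (fun v : ℝ => Real.exp (-v)) (Set.Ioi (0:ℝ)) := by
    simpa using exp_neg_integrableOn_Ioi 0 one_pos
  have hIlog : IntegrableOn (fun v : ℝ => Real.exp (-v) * Real.log v) (Set.Ioi (0:ℝ)) := by
    simpa using L1' le_rfl
  have h3 : (∫ v in Set.Ioi (0:ℝ), Real.exp (-v) * (Real.log v - Real.log s))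
      = -Real.eulerMascheroniConstant - Real.log s := by
    have : (fun v : ℝ => Real.exp (-v) * (Real.log v - Real.log s))
        = fun v => Real.exp (-v) * Real.log v - Real.log s * Real.exp (-v) := by
      funext v; ring
    rw [this, integral_sub hIlog (hIexp.const_mul _), L2, integral_const_mul,
      integral_exp_neg_Ioi, neg_zero, Real.exp_zero, mul_one]
  rw [h2, h1, h3, smul_eq_mul]
  ring

lemma L4 : (∫ t in Set.Ioo (0:ℝ) 1, Real.exp t * Real.log (-Real.log t))
    = ∫ u in Set.Ioi (0:ℝ), Real.exp (-u) * (Real.exp (Real.exp (-u)) * Real.log u) := by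
  have himg : (fun u : ℝ => Real.exp (-u)) '' Set.Ioi 0 = Set.Ioo 0 1 := by
    ext y
    constructor
    · rintro ⟨u, hu, rfl⟩
      exact ⟨Real.exp_pos _, Real.exp_lt_one_iff.mpr (neg_neg_iff_pos.mpr hu)⟩
    · rintro ⟨hy0, hy1⟩
      exact ⟨-Real.log y, by simpa using Real.log_neg hy0 hy1,
        by simp [Real.exp_log hy0]⟩
  have hinj : Set.InjOn (fun u : ℝ => Real.exp (-u)) (Set.Ioi 0) := by
    intro a _ b _ h
    simpa using Real.exp_injective h
  have hderiv : ∀ u ∈ Set.Ioi (0:ℝ),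
      HasDerivWithinAt (fun u : ℝ => Real.exp (-u)) (-Real.exp (-u)) (Set.Ioi 0) u := by
    intro u _
    have h := ((Real.hasDerivAt_exp (-u)).comp u (hasDerivAt_neg u)).hasDerivWithinAt (s := Set.Ioi 0)
    simp only [mul_neg, mul_one] at h
    exact h
  have := integral_image_eq_integral_abs_deriv_smul measurableSet_Ioi hderiv hinj
    (fun t => Real.exp t * Real.log (-Real.log t))
  rw [himg] at this
  rw [this]
  refine setIntegral_congr_fun measurableSet_Ioi (fun u hu => ?_)
  rw [abs_neg, abs_of_nonneg (Real.exp_pos _).le, smul_eq_mul, Real.log_exp, neg_neg]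

noncomputable def F (n : ℕ) (u : ℝ) : ℝ :=
  Real.exp (-(((n:ℝ) + 1) * u)) * Real.log u / (n.factorial : ℝ)

lemma L5 {u : ℝ} (hu : 0 < u) :
    Real.exp (-u) * (Real.exp (Real.exp (-u)) * Real.log u) = ∑' n : ℕ, F n u := by
  have hexp : Real.exp (Real.exp (-u)) = ∑' n : ℕ, Real.exp (-u) ^ n / n.factorial := by
    rw [Real.exp_eq_exp_ℝ, NormedSpace.exp_eq_tsum_div]
  rw [hexp, ← tsum_mul_right, ← tsum_mul_left]
  refine tsum_congr (fun n => ?_)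
  unfold F
  rw [← Real.exp_nat_mul]
  rw [show -(((n:ℝ) + 1) * u) = -u + n * -u by ring, Real.exp_add]
  ring

lemma L6int (n : ℕ) : Integrable (F n) (volume.restrict (Set.Ioi (0:ℝ))) := by
  have := (L1' (c := (n:ℝ) + 1) (by simp)).div_const (n.factorial : ℝ)
  exact this

lemma L6val (n : ℕ) : ∫ u in Set.Ioi (0:ℝ), F n u
    = (-Real.eulerMascheroniConstant - Real.log ((n:ℝ) + 1)) / ((n+1).factorial : ℝ) := by
  unfold F
  rw [integral_div, L3 (by positivity : (0:ℝ) < (n:ℝ) + 1)]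
  rw [Nat.factorial_succ]
  push_cast
  field_simp

lemma L6 : (∫ u in Set.Ioi (0:ℝ), Real.exp (-u) * (Real.exp (Real.exp (-u)) * Real.log u))
    = ∑' n : ℕ, (-Real.eulerMascheroniConstant - Real.log ((n:ℝ) + 1)) / ((n+1).factorial : ℝ) := by
  set C : ℝ := ∫ u in Set.Ioi (0:ℝ), Real.exp (-u) * |Real.log u| with hCdef
  have hsum : Summable fun n : ℕ => ∫ u in Set.Ioi (0:ℝ), ‖F n u‖ := by
    have hS : Summable (fun n : ℕ => C * ((1:ℝ) ^ n / n.factorial)) :=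
      (Real.summable_pow_div_factorial 1).mul_left C
    refine hS.of_nonneg_of_le (fun n => integral_nonneg fun u => norm_nonneg _) (fun n => ?_)
    have hle : ∫ u in Set.Ioi (0:ℝ), ‖F n u‖
        ≤ ∫ u in Set.Ioi (0:ℝ), (Real.exp (-u) * |Real.log u|) / (n.factorial : ℝ) := by
      refine integral_mono_ae (L6int n).norm (L1.integrable.div_const _) ?_
      filter_upwards [ae_restrict_mem measurableSet_Ioi] with u hu
      have hu0 : (0:ℝ) < u := hu
      unfold F
      rw [Real.norm_eq_abs, abs_div, abs_mul, abs_of_nonneg (Real.exp_pos _).le,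
        Nat.abs_cast]
      gcongr
      have := Nat.cast_nonneg (α := ℝ) n
      nlinarith
    refine hle.trans_eq ?_
    rw [integral_div, one_pow, ← hCdef]
    ring
  have hcongr : (∫ u in Set.Ioi (0:ℝ),
        Real.exp (-u) * (Real.exp (Real.exp (-u)) * Real.log u))
      = ∫ u in Set.Ioi (0:ℝ), ∑' n : ℕ, F n u :=
    setIntegral_congr_fun measurableSet_Ioi fun u hu => L5 hu
  rw [hcongr, ← MeasureTheory.integral_tsum_of_summable_integral_norm L6int hsum]
  exact tsum_congr L6val

lemma hfact : Summable (fun n : ℕ => (1:ℝ) / n.factorial) := by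
  simpa using Real.summable_pow_div_factorial 1

lemma hs1 : Summable (fun n : ℕ => (1:ℝ) / (n+1).factorial) :=
  (summable_nat_add_iff 1).mpr hfact

lemma hs2 : Summable (fun n : ℕ => Real.log ((n:ℝ)+1) / ((n+1).factorial : ℝ)) := by
  refine hfact.of_nonneg_of_le (fun n => div_nonneg (Real.log_nonneg (by simp)) (by positivity)) (fun n => ?_)
  have h1 : Real.log ((n:ℝ)+1) ≤ (n:ℝ)+1 :=
    (Real.log_le_sub_one_of_pos (by positivity)).trans (by linarith)
  have h2 : ((n+1).factorial : ℝ) = ((n:ℝ)+1) * n.factorial := by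
    rw [Nat.factorial_succ]; push_cast; ring
  rw [h2, div_le_div_iff₀ (by positivity) (by positivity)]
  have h3 : (0:ℝ) < n.factorial := by positivity
  nlinarith
lemma hE : ∑' n : ℕ, (1:ℝ) / (n+1).factorial = Real.exp 1 - 1 := by
  have h : Real.exp 1 = ∑' n : ℕ, (1:ℝ) / n.factorial := by
    rw [Real.exp_eq_exp_ℝ, NormedSpace.exp_eq_tsum_div]
    simp
  rw [h, Summable.tsum_eq_zero_add hfact]
  simp

theorem stmt_15 :
    ∫ t in Set.Ioo (0 : ℝ) 1, Real.exp t * Real.log (-Real.log t)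
      = -(∑' k : ℕ, Real.log (k + 1) / (k + 1).factorial)
          - Real.eulerMascheroniConstant * (Real.exp 1 - 1) := by
  rw [L4, L6]
  have split : ∀ n : ℕ,
      (-Real.eulerMascheroniConstant - Real.log ((n:ℝ) + 1)) / ((n+1).factorial : ℝ)
      = -Real.eulerMascheroniConstant * ((1:ℝ) / (n+1).factorial)
        - Real.log ((n:ℝ)+1) / ((n+1).factorial : ℝ) := by
    intro n; ring
  rw [tsum_congr split, Summable.tsum_sub (hs1.mul_left _) hs2, tsum_mul_left, hE]
  ring
end

section
/- ∑_{k=1}^∞ (−1)^{k−1} (1/k − log(1 + 1/k)) = log(4/π). -/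
open Filter Finset Real Topology

private lemma sum_range_two_mul (g : ℕ → ℝ) (n : ℕ) :
    ∑ k ∈ range (2 * n), g k = ∑ i ∈ range n, (g (2 * i) + g (2 * i + 1)) := by
  induction n with
  | zero => simp
  | succ n ih =>
    rw [Nat.mul_succ, Finset.sum_range_succ, Finset.sum_range_succ, Finset.sum_range_succ, ih]
    ring

private lemma A_eq (n : ℕ) :
    ∑ i ∈ range n, ((1 : ℝ) / (2 * (i : ℝ) + 1) - 1 / (2 * (i : ℝ) + 2))
      = (harmonic (2 * n) : ℝ) - (harmonic n : ℝ) := by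
  induction n with
  | zero => simp
  | succ n ih =>
    rw [Finset.sum_range_succ, ih, Nat.mul_succ, harmonic_succ, harmonic_succ, harmonic_succ]
    push_cast
    have h1 : (2 : ℝ) * n + 1 ≠ 0 := by positivity
    have h2 : (2 : ℝ) * n + 2 ≠ 0 := by positivity
    have h3 : (n : ℝ) + 1 ≠ 0 := by positivity
    field_simp
    ring

theorem stmt_17 :
    ∑' k : ℕ, (-1 : ℝ) ^ k * (1 / ((k : ℝ) + 1) - Real.log (1 + 1 / ((k : ℝ) + 1)))
      = Real.log (4 / Real.pi) := by
  set f : ℕ → ℝ := fun k => (-1 : ℝ) ^ k * (1 / ((k : ℝ) + 1) - Real.log (1 + 1 / ((k : ℝ) + 1)))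
    with hf
  -- basic facts about each term
  have hterm : ∀ k : ℕ, 0 ≤ 1 / ((k : ℝ) + 1) - Real.log (1 + 1 / ((k : ℝ) + 1)) ∧
      1 / ((k : ℝ) + 1) - Real.log (1 + 1 / ((k : ℝ) + 1)) ≤ 1 / ((k : ℝ) + 1) ^ 2 := by
    intro k
    set x : ℝ := 1 / ((k : ℝ) + 1) with hx
    have hx0 : 0 < x := by positivity
    have hx1 : (0 : ℝ) < 1 + x := by linarith
    constructor
    · have := Real.log_le_sub_one_of_pos hx1
      linarith
    · have h := Real.log_le_sub_one_of_pos (x := (1 + x)⁻¹) (by positivity)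
      rw [Real.log_inv] at h
      have hlog : x / (1 + x) ≤ Real.log (1 + x) := by
        have : (1 + x)⁻¹ - 1 = -(x / (1 + x)) := by field_simp; ring
        rw [this] at h; linarith
      have hdiv : x - x / (1 + x) = x ^ 2 / (1 + x) := by field_simp; ring
      have : x ^ 2 / (1 + x) ≤ x ^ 2 := by
        apply div_le_self (by positivity) (by linarith)
      have hx2 : x ^ 2 = 1 / ((k : ℝ) + 1) ^ 2 := by rw [hx]; rw [div_pow]; norm_num
      linarith
  -- summability
  have hsum : Summable f := by
    have hb : Summable (fun k : ℕ => 1 / ((k : ℝ) + 1) ^ 2) := by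
      have := (summable_nat_add_iff (f := fun n : ℕ => 1 / (n : ℝ) ^ 2) 1).mpr
        (summable_one_div_nat_pow.mpr one_lt_two)
      simpa using this
    apply Summable.of_abs
    apply Summable.of_nonneg_of_le (fun k => abs_nonneg _) _ hb
    intro k
    rw [hf, abs_mul, abs_pow, abs_neg, abs_one, one_pow, one_mul,
      abs_of_nonneg (hterm k).1]
    exact (hterm k).2
  -- partial sums
  have hS : Tendsto (fun n => ∑ k ∈ range n, f k) atTop (𝓝 (∑' k, f k)) :=
    hsum.hasSum.tendsto_sum_nat
  have h2n : Tendsto (fun n : ℕ => 2 * n) atTop atTop :=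
    tendsto_atTop_mono (fun n => (by omega : n ≤ 2 * n)) tendsto_id
  have hS2 : Tendsto (fun n => ∑ k ∈ range (2 * n), f k) atTop (𝓝 (∑' k, f k)) :=
    hS.comp h2n
  -- rewrite the even partial sums
  have hlogterm : ∀ k : ℕ, Real.log (1 + 1 / ((k : ℝ) + 1))
      = Real.log ((k : ℝ) + 2) - Real.log ((k : ℝ) + 1) := by
    intro k
    have h1 : ((k : ℝ) + 1) ≠ 0 := by positivity
    rw [← Real.log_div (by positivity) h1]
    congr 1
    field_simp
    ring
  have hW : ∀ n : ℕ, Real.log (Real.Wallis.W n)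
      = ∑ i ∈ range n, ((Real.log (2 * (i : ℝ) + 2) - Real.log (2 * (i : ℝ) + 1))
          - (Real.log (2 * (i : ℝ) + 3) - Real.log (2 * (i : ℝ) + 2))) := by
    intro n
    rw [Real.Wallis.W, Real.log_prod]
    · apply Finset.sum_congr rfl
      intro i _
      rw [Real.log_mul (by positivity) (by positivity),
        Real.log_div (by positivity) (by positivity),
        Real.log_div (by positivity) (by positivity)]
      ring
    · intro i _
      positivity
  have hSeq : ∀ n : ℕ, ∑ k ∈ range (2 * n), f k
      = ((harmonic (2 * n) : ℝ) - (harmonic n : ℝ)) - Real.log (Real.Wallis.W n) := by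
    intro n
    rw [sum_range_two_mul, hW n, ← A_eq n, ← Finset.sum_sub_distrib]
    apply Finset.sum_congr rfl
    intro i _
    rw [hf]
    simp only [hlogterm]
    push_cast
    simp only [pow_succ, pow_mul, neg_one_sq, one_pow, one_mul]
    ring
  -- limit of the even partial sums
  have hWlim : Tendsto (fun n => Real.log (Real.Wallis.W n)) atTop (𝓝 (Real.log (π / 2))) :=
    ((Real.continuousAt_log (by positivity)).tendsto).comp Real.Wallis.tendsto_W_nhds_pi_div_two
  have hHlim : Tendsto (fun n : ℕ => (harmonic (2 * n) : ℝ) - (harmonic n : ℝ)) atTop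
      (𝓝 (Real.log 2)) := by
    have hA : Tendsto (fun n : ℕ => ((harmonic (2 * n) : ℝ) - Real.log (2 * n))
        - ((harmonic n : ℝ) - Real.log n)) atTop
        (𝓝 (Real.eulerMascheroniConstant - Real.eulerMascheroniConstant)) := by
      refine ((Real.tendsto_harmonic_sub_log.comp h2n).congr (fun n => ?_)).sub
        Real.tendsto_harmonic_sub_log
      simp only [Function.comp_apply]
      push_cast
      ring
    rw [sub_self] at hA
    have : Tendsto (fun n : ℕ => ((harmonic (2 * n) : ℝ) - Real.log (2 * n))
        - ((harmonic n : ℝ) - Real.log n) + Real.log 2) atTop (𝓝 (0 + Real.log 2)) :=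
      hA.add tendsto_const_nhds
    rw [zero_add] at this
    apply this.congr'
    filter_upwards [eventually_gt_atTop 0] with n hn
    have hn' : (0 : ℝ) < n := by exact_mod_cast hn
    rw [Real.log_mul (by norm_num) hn'.ne']
    ring
  have hlim : Tendsto (fun n => ∑ k ∈ range (2 * n), f k) atTop
      (𝓝 (Real.log 2 - Real.log (π / 2))) := by
    simp only [hSeq]
    exact hHlim.sub hWlim
  have := tendsto_nhds_unique hS2 hlim
  rw [this, Real.log_div (by norm_num) Real.pi_ne_zero,
    Real.log_div (Real.pi_ne_zero) (by norm_num)]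
  have h4 : Real.log 4 = 2 * Real.log 2 := by
    rw [show (4 : ℝ) = 2 ^ 2 by norm_num, Real.log_pow]
    push_cast; ring
  rw [h4]
  ring
end

section
/- ∫_0^1 (y − 1)/((1 + y)·log y) dy = log(π/2). -/
open MeasureTheory Real Set Filter intervalIntegral

-- Lemma A: ∫ s in Ioo 0 1, y ^ s = (y - 1) / log y, for 0 < y < 1
lemma lemA {y : ℝ} (hy0 : 0 < y) (hy1 : y < 1) :
    ∫ s in Ioo (0:ℝ) 1, y ^ s = (y - 1) / Real.log y := by
  have hlog : Real.log y ≠ 0 := by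
    have := Real.log_neg hy0 hy1; linarith
  have h1 : ∫ s in Ioo (0:ℝ) 1, y ^ s = ∫ s in (0:ℝ)..1, Real.exp (Real.log y * s) := by
    rw [intervalIntegral.integral_of_le (by norm_num), MeasureTheory.integral_Ioc_eq_integral_Ioo]
    refine setIntegral_congr_fun measurableSet_Ioo (fun s _ => ?_)
    rw [Real.rpow_def_of_pos hy0]
  rw [h1]
  have hder : ∀ s ∈ uIcc (0:ℝ) 1, HasDerivAt (fun t => Real.exp (Real.log y * t) / Real.log y)
      (Real.exp (Real.log y * s)) s := by
    intro s _
    have h := ((Real.hasDerivAt_exp (Real.log y * s)).comp s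
      ((hasDerivAt_id s).const_mul (Real.log y)))
    have h2 := h.div_const (Real.log y)
    simpa [mul_comm, mul_div_assoc, mul_div_cancel_left₀ _ hlog] using h2
  rw [intervalIntegral.integral_eq_sub_of_hasDerivAt hder
    ((Real.continuous_exp.comp (continuous_const.mul continuous_id)).intervalIntegrable 0 1)]
  rw [mul_one, mul_zero, Real.exp_log hy0, Real.exp_zero]
  ring


-- Lemma B: ∫ y in Ioo 0 1, (1-y) * y^a = 1/(a+1) - 1/(a+2), for a > 0
lemma lemB {a : ℝ} (ha : 0 < a) :
    ∫ y in Ioo (0:ℝ) 1, (1 - y) * y ^ a = 1/(a+1) - 1/(a+2) := by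
  have h1 : ∫ y in Ioo (0:ℝ) 1, (1 - y) * y ^ a
      = ∫ y in (0:ℝ)..1, (y ^ a - y ^ (a+1)) := by
    rw [intervalIntegral.integral_of_le (by norm_num), MeasureTheory.integral_Ioc_eq_integral_Ioo]
    refine setIntegral_congr_fun measurableSet_Ioo (fun y hy => ?_)
    rw [Real.rpow_add_one (ne_of_gt hy.1)]
    ring
  rw [h1, intervalIntegral.integral_sub
      (intervalIntegral.intervalIntegrable_rpow (Or.inl ha.le))
      (intervalIntegral.intervalIntegrable_rpow (Or.inl (by linarith))),
    integral_rpow (Or.inl (by linarith)), integral_rpow (Or.inl (by linarith)),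
    Real.one_rpow, Real.one_rpow, Real.zero_rpow (by linarith), Real.zero_rpow (by linarith)]
  ring

-- Lemma C: ∫ s in 0..1, 1/(s+c) = log ((c+1)/c), for c > 0
lemma lemC {c : ℝ} (hc : 0 < c) :
    ∫ s in (0:ℝ)..1, 1/(s+c) = Real.log ((c+1)/c) := by
  have := intervalIntegral.integral_comp_add_right (a := (0:ℝ)) (b := 1) (fun x => 1/x) c
  rw [this, integral_one_div (by
    intro h
    rcases Set.mem_uIcc.mp h with h | h <;> linarith [h.1, h.2])]
  norm_num [add_comm c 1]

lemma lemSwap (k : ℕ) :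
    ∫ y in Ioo (0:ℝ) 1, (1 - y) * y ^ (2*k) * ((y - 1)/Real.log y)
      = Real.log (((2*k:ℝ)+2)/((2*k:ℝ)+1) * (((2*k:ℝ)+2)/((2*k:ℝ)+3))) := by
  set f : ℝ → ℝ → ℝ := fun y s => (1 - y) * y ^ ((2*k:ℝ) + s) with hf
  -- Step 1: pointwise rewrite as inner integral over s
  have key : ∀ y ∈ Ioo (0:ℝ) 1,
      (1 - y) * y ^ (2*k) * ((y - 1)/Real.log y) = ∫ s in Ioo (0:ℝ) 1, f y s := by
    intro y hy
    have : ∀ s : ℝ, f y s = ((1 - y) * y ^ (2*k)) * y ^ s := by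
      intro s
      rw [hf]
      simp only
      rw [Real.rpow_add hy.1]
      rw [show ((2*k : ℝ)) = ((2*k : ℕ) : ℝ) by push_cast; ring, Real.rpow_natCast]
      ring
    simp_rw [this]
    rw [MeasureTheory.integral_const_mul, lemA hy.1 hy.2]
  rw [setIntegral_congr_fun measurableSet_Ioo key]
  -- Step 2: Fubini swap
  have hint : Integrable (Function.uncurry f)
      ((volume.restrict (Ioo (0:ℝ) 1)).prod (volume.restrict (Ioo (0:ℝ) 1))) := by
    rw [Measure.prod_restrict]
    have hmeas : AEStronglyMeasurable (Function.uncurry f)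
        ((volume.prod volume).restrict ((Ioo (0:ℝ) 1) ×ˢ (Ioo (0:ℝ) 1))) := by
      refine ContinuousOn.aestronglyMeasurable ?_ (measurableSet_Ioo.prod measurableSet_Ioo)
      refine (continuousOn_const.sub continuous_fst.continuousOn).mul
        (ContinuousOn.rpow continuous_fst.continuousOn
          (continuous_const.add continuous_snd).continuousOn ?_)
      intro p hp
      exact Or.inl (ne_of_gt hp.1.1)
    refine Integrable.mono' (g := fun _ => (1:ℝ)) ?_ hmeas ?_
    · refine (integrableOn_const_iff (C := (1:ℝ))).mpr (Or.inr ?_)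
      rw [Measure.prod_prod]
      exact ENNReal.mul_lt_top (by simp) (by simp)
    · filter_upwards [ae_restrict_mem (measurableSet_Ioo.prod measurableSet_Ioo)] with p hp
      obtain ⟨hp1, hp2⟩ := hp
      have h0 : (0:ℝ) ≤ p.1 ^ ((2*k:ℝ) + p.2) := Real.rpow_nonneg hp1.1.le _
      have h1 : p.1 ^ ((2*k:ℝ) + p.2) ≤ 1 :=
        Real.rpow_le_one hp1.1.le hp1.2.le (by have := hp2.1; positivity)
      have : Function.uncurry f p = (1 - p.1) * p.1 ^ ((2*k:ℝ) + p.2) := rfl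
      rw [Real.norm_eq_abs, this, abs_of_nonneg (by nlinarith [hp1.2.le])]
      nlinarith [hp1.1.le, hp1.2.le]
  rw [MeasureTheory.integral_integral_swap hint]
  -- Step 3: inner y-integral
  have inner : ∀ s ∈ Ioo (0:ℝ) 1,
      (∫ y in Ioo (0:ℝ) 1, f y s) = 1/(s+(2*k+1)) - 1/(s+(2*k+2)) := by
    intro s hs
    rw [show (∫ y in Ioo (0:ℝ) 1, f y s) = ∫ y in Ioo (0:ℝ) 1, (1-y) * y ^ ((2*k:ℝ)+s) from rfl,
      lemB (by have := hs.1; positivity), ]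
    ring_nf
  rw [setIntegral_congr_fun measurableSet_Ioo inner]
  -- Step 4: outer s-integral
  have h2 : ∫ s in Ioo (0:ℝ) 1, (1/(s+(2*k+1)) - 1/(s+(2*k+2)))
      = ∫ s in (0:ℝ)..1, (1/(s+(2*k+1)) - 1/(s+(2*k+2))) := by
    rw [intervalIntegral.integral_of_le (by norm_num), MeasureTheory.integral_Ioc_eq_integral_Ioo]
  have c1 : ContinuousOn (fun s : ℝ => 1/(s+(2*k+1))) (uIcc 0 1) := by
    apply ContinuousOn.div continuousOn_const (by fun_prop)
    intro x hx; rcases Set.mem_uIcc.mp hx with h | h <;> push_cast <;> nlinarith [h.1, h.2]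
  have c2 : ContinuousOn (fun s : ℝ => 1/(s+(2*k+2))) (uIcc 0 1) := by
    apply ContinuousOn.div continuousOn_const (by fun_prop)
    intro x hx; rcases Set.mem_uIcc.mp hx with h | h <;> push_cast <;> nlinarith [h.1, h.2]
  rw [h2, intervalIntegral.integral_sub (c1.intervalIntegrable) (c2.intervalIntegrable),
    lemC (by positivity), lemC (by positivity)]
  rw [← Real.log_div (by positivity) (by positivity)]
  congr 1
  field_simp
  ring

noncomputable def ck (k : ℕ) : ℝ :=
  Real.log (((2*k:ℝ)+2)/((2*k:ℝ)+1) * (((2*k:ℝ)+2)/((2*k:ℝ)+3)))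

lemma ck_nonneg (k : ℕ) : 0 ≤ ck k := by
  apply Real.log_nonneg
  rw [div_mul_div_comm]
  rw [le_div_iff₀ (by positivity)]
  ring_nf
  nlinarith [sq_nonneg (2*(k:ℝ)+2)]

lemma hasSum_ck : HasSum ck (Real.log (Real.pi / 2)) := by
  rw [hasSum_iff_tendsto_nat_of_nonneg ck_nonneg]
  have h : ∀ n : ℕ, ∑ i ∈ Finset.range n, ck i
      = Real.log (∏ i ∈ Finset.range n, ((2:ℝ) * i + 2) / (2 * i + 1) * ((2 * i + 2) / (2 * i + 3))) := by
    intro n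
    rw [Real.log_prod]
    · rfl
    · intro i _
      positivity
  simp_rw [h]
  exact ((Real.continuousAt_log (by positivity)).tendsto).comp Real.tendsto_prod_pi_div_two

-- pointwise series expansion
lemma ptwise {y : ℝ} (hy0 : 0 < y) (hy1 : y < 1) :
    (y - 1) / ((1 + y) * Real.log y)
      = ∑' k : ℕ, (1 - y) * y ^ (2*k) * ((y - 1)/Real.log y) := by
  have hsq : y^2 < 1 := by nlinarith
  have hgeo : ∑' k : ℕ, (y^2) ^ k = (1 - y^2)⁻¹ :=
    tsum_geometric_of_lt_one (by positivity) hsq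
  have : ∀ k : ℕ, (1 - y) * y ^ (2*k) * ((y - 1)/Real.log y)
      = ((1 - y) * ((y - 1)/Real.log y)) * (y^2) ^ k := by
    intro k; rw [pow_mul]; ring
  rw [tsum_congr this, tsum_mul_left, hgeo]
  have h1y : (1:ℝ) - y^2 ≠ 0 := by nlinarith
  have hlog : Real.log y ≠ 0 := by
    have := Real.log_neg hy0 hy1; linarith
  field_simp
  ring

lemma G_bound {y : ℝ} (hy0 : 0 < y) (hy1 : y < 1) (k : ℕ) :
    0 ≤ (1 - y) * y ^ (2*k) * ((y - 1)/Real.log y) ∧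
    (1 - y) * y ^ (2*k) * ((y - 1)/Real.log y) ≤ 1 := by
  have hlogneg : Real.log y < 0 := Real.log_neg hy0 hy1
  have hle : Real.log y ≤ y - 1 := Real.log_le_sub_one_of_pos hy0
  have hratio0 : 0 ≤ (y - 1)/Real.log y := by
    rw [div_nonneg_iff]; right; exact ⟨by linarith, hlogneg.le⟩
  have hratio1 : (y - 1)/Real.log y ≤ 1 := by
    rw [div_le_one_of_neg hlogneg]
    linarith
  have hp0 : (0:ℝ) ≤ y ^ (2*k) := by positivity
  have hp1 : y ^ (2*k) ≤ 1 := pow_le_one₀ hy0.le hy1.le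
  constructor
  · have : (0:ℝ) ≤ 1 - y := by linarith
    positivity
  · exact mul_le_one₀ (mul_le_one₀ (by linarith) hp0 hp1) hratio0 hratio1

lemma G_meas (k : ℕ) : AEStronglyMeasurable
    (fun y => (1 - y) * y ^ (2*k) * ((y - 1)/Real.log y))
    (volume.restrict (Ioo (0:ℝ) 1)) := by
  refine ContinuousOn.aestronglyMeasurable ?_ measurableSet_Ioo
  refine ((continuousOn_const.sub continuousOn_id).mul
    (continuousOn_pow _ |>.comp continuousOn_id (fun x hx => hx))).mul ?_
  · refine ContinuousOn.div (continuousOn_id.sub continuousOn_const) ?_ ?_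
    · exact fun y hy => (Real.continuousAt_log (ne_of_gt hy.1)).continuousWithinAt
    · intro y hy
      have := Real.log_neg hy.1 hy.2; linarith

lemma G_int (k : ℕ) : Integrable
    (fun y => (1 - y) * y ^ (2*k) * ((y - 1)/Real.log y))
    (volume.restrict (Ioo (0:ℝ) 1)) := by
  refine Integrable.mono' (g := fun _ => (1:ℝ)) ?_ (G_meas k) ?_
  · exact (integrableOn_const_iff (C := (1:ℝ))).mpr (Or.inr (by simp))
  · filter_upwards [ae_restrict_mem measurableSet_Ioo] with y hy
    rw [Real.norm_eq_abs, abs_of_nonneg (G_bound hy.1 hy.2 k).1]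
    exact (G_bound hy.1 hy.2 k).2

theorem stmt_18 :
    ∫ y in Set.Ioo (0 : ℝ) 1, (y - 1) / ((1 + y) * Real.log y)
      = Real.log (Real.pi / 2) := by
  have step1 : ∫ y in Set.Ioo (0 : ℝ) 1, (y - 1) / ((1 + y) * Real.log y)
      = ∫ y in Set.Ioo (0 : ℝ) 1, ∑' k : ℕ, (1 - y) * y ^ (2*k) * ((y - 1)/Real.log y) :=
    setIntegral_congr_fun measurableSet_Ioo (fun y hy => ptwise hy.1 hy.2)
  have hlint : ∀ k : ℕ, ∫⁻ y, ‖(1 - y) * y ^ (2*k) * ((y - 1)/Real.log y)‖ₑ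
      ∂(volume.restrict (Ioo (0:ℝ) 1)) = ENNReal.ofReal (ck k) := by
    intro k
    rw [ck]
    rw [← lemSwap k]
    rw [ofReal_integral_eq_lintegral_ofReal (G_int k)
      (by filter_upwards [ae_restrict_mem measurableSet_Ioo] with y hy
          exact (G_bound hy.1 hy.2 k).1)]
    refine lintegral_congr_ae ?_
    filter_upwards [ae_restrict_mem measurableSet_Ioo] with y hy
    rw [Real.enorm_eq_ofReal (G_bound hy.1 hy.2 k).1]
  rw [step1, MeasureTheory.integral_tsum (fun k => G_meas k) ?_]
  · rw [tsum_congr (fun k => lemSwap k)]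
    exact hasSum_ck.tsum_eq
  · rw [tsum_congr hlint, ← ENNReal.ofReal_tsum_of_nonneg ck_nonneg hasSum_ck.summable]
    exact ENNReal.ofReal_ne_top
end
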